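/- arXiv:1702.05678 — 2 statements merged into one kernel-verified Lean document; each statement's English description precedes it below -/
import Mathlib

section
/- There is an absolute constant C > 0 such that for every k ≥ 0, every d ≥ 2, every n, and every ε ∈ (0,1], both the property of (2k+1)-cycle-freeness and the property of (2k+2)-cycle-freeness of n-vertex graphs with maximum degree at most d admit a one-sided (k, q)-round-adaptive ε-tester in the bounded-degree graph model with q ≤ C·d^{k+2}/ε. -/
open scoped ENNReal BigOperators

namespace Adaptivity

/-- A deterministic `k`-round-adaptive query algorithm over domain `D` with answer
alphabet `R` and output type `O`: in each of the `k+1` rounds it chooses a query set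
based on the partial view of the oracle obtained so far (which records exactly the
previously queried points and the answers received), and finally produces an output
from the full view obtained. -/
structure DetAlg (D R O : Type) [DecidableEq D] (k : ℕ) where
  query : Fin (k + 1) → (D → Option R) → Finset D
  out : (D → Option R) → O

variable {D R O : Type} [DecidableEq D] {k : ℕ}

/-- The partial view of an oracle `f` on a set `Q` of already-queried points. -/
def view (f : D → R) (Q : Finset D) : D → Option R :=
  fun x => if x ∈ Q then some (f x) else none

/-- The set of points queried during the first `ℓ` rounds, when run on oracle `f`. -/
def DetAlg.seen (T : DetAlg D R O k) (f : D → R) : ℕ → Finset D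
  | 0 => ∅
  | ℓ + 1 =>
      T.seen f ℓ ∪
        (if h : ℓ < k + 1 then T.query ⟨ℓ, h⟩ (view f (T.seen f ℓ)) else ∅)

/-- The query set produced in round `ℓ` on oracle `f`. -/
def DetAlg.queries (T : DetAlg D R O k) (f : D → R) (ℓ : Fin (k + 1)) : Finset D :=
  T.query ℓ (view f (T.seen f ℓ.1))

/-- The total number of queries made on oracle `f`. -/
def DetAlg.totalQueries (T : DetAlg D R O k) (f : D → R) : ℕ :=
  ∑ ℓ : Fin (k + 1), (T.queries f ℓ).card

/-- The output of the algorithm on oracle `f`. -/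
def DetAlg.run (T : DetAlg D R O k) (f : D → R) : O :=
  T.out (view f (T.seen f (k + 1)))

/-- A randomized `k`-round-adaptive algorithm is a probability distribution (`PMF`) over
deterministic ones; `probOut A f p` is the probability that its output on oracle `f`
satisfies the predicate `p`. -/
noncomputable def probOut (A : PMF (DetAlg D R O k)) (f : D → R) (p : O → Prop) : ℝ≥0∞ :=
  A.toOuterMeasure {T | p (T.run f)}

/-- The randomized algorithm `A` makes at most `q` queries in total, on every oracle. -/
def queryBound (A : PMF (DetAlg D R O k)) (q : ℝ) : Prop :=
  ∀ T ∈ A.support, ∀ f : D → R, (T.totalQueries f : ℝ) ≤ q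

/-- Relative Hamming distance between two functions on a finite domain. -/
noncomputable def hamDist [Fintype D] (f g : D → R) : ℝ :=
  ({x : D | f x ≠ g x}.ncard : ℝ) / (Fintype.card D : ℝ)

/-- Relative Hamming distance from a function to a (nonempty) property. -/
noncomputable def distToProp [Fintype D] (f : D → R) (P : Set (D → R)) : ℝ :=
  sInf (hamDist f '' P)

/-- `A` is a `(k,q)`-round-adaptive `ε`-tester for the property `P`. -/
def IsTester [Fintype D] (q ε : ℝ) (P : Set (D → R))
    (A : PMF (DetAlg D R Bool k)) : Prop :=
  queryBound A q ∧
    (∀ f ∈ P, (2 : ℝ≥0∞) / 3 ≤ probOut A f (· = true)) ∧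
    (∀ f : D → R, ε < distToProp f P → (2 : ℝ≥0∞) / 3 ≤ probOut A f (· = false))

/-- `A` is a one-sided tester for `P`: it accepts every member of `P` with probability 1. -/
def OneSidedTester [Fintype D] (P : Set (D → R)) (A : PMF (DetAlg D R Bool k)) : Prop :=
  ∀ f ∈ P, probOut A f (· = true) = 1

end Adaptivity

namespace Adaptivity

/-- `g : [n]×[d] → Option [n]` is an adjacency-list representation of the simple graph
`G` on `Fin n` with maximum degree at most `d`: the entries `g (v, i)` that are `some u`
list (without repetition) exactly the neighbors of `v`, and `none` stands for the
symbol `0` (no neighbor in that slot). -/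
def Represents (n d : ℕ) (G : SimpleGraph (Fin n))
    (g : Fin n × Fin d → Option (Fin n)) : Prop :=
  (∀ v u : Fin n, G.Adj v u ↔ ∃ i : Fin d, g (v, i) = some u) ∧
    (∀ v : Fin n, ∀ i j : Fin d, ∀ u : Fin n,
      g (v, i) = some u → g (v, j) = some u → i = j)

/-- Distance between two bounded-degree graphs: the minimum, over adjacency-list
representations of the two graphs, of the fraction of the `d·n` entries on which the
representations differ. -/
noncomputable def graphDist (n d : ℕ) (G H : SimpleGraph (Fin n)) : ℝ :=
  sInf {r : ℝ | ∃ g g' : Fin n × Fin d → Option (Fin n),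
    Represents n d G g ∧ Represents n d H g' ∧ r = hamDist g g'}

/-- Distance from a bounded-degree graph to a property of graphs. -/
noncomputable def distGraphProp (n d : ℕ) (G : SimpleGraph (Fin n))
    (P : Set (SimpleGraph (Fin n))) : ℝ :=
  sInf {r : ℝ | ∃ H ∈ P, r = graphDist n d G H}

/-- A graph is `t`-cycle-free if it has no cycle of length at most `t`. -/
def CycleFreeUpTo {V : Type} (G : SimpleGraph V) (t : ℕ) : Prop :=
  ∀ (v : V) (w : G.Walk v v), w.IsCycle → t < w.length

/-- The property of `n`-vertex graphs with maximum degree at most `d` that are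
`t`-cycle-free. -/
def cycleFreeProp (n d t : ℕ) : Set (SimpleGraph (Fin n)) :=
  {G | (∀ v : Fin n, (G.neighborSet v).ncard ≤ d) ∧ CycleFreeUpTo G t}

/-- `A` is a `(k,q)`-round-adaptive `ε`-tester for the graph property `P` in the
bounded-degree graph model: with oracle access to any adjacency-list representation, it
accepts every graph in `P` with probability `≥ 2/3` and rejects every bounded-degree
graph at distance `> ε` from `P` with probability `≥ 2/3`. -/
def IsGraphTester (n d : ℕ) {k : ℕ} (q ε : ℝ) (P : Set (SimpleGraph (Fin n)))
    (A : PMF (DetAlg (Fin n × Fin d) (Option (Fin n)) Bool k)) : Prop :=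
  queryBound A q ∧
    (∀ G ∈ P, ∀ g : Fin n × Fin d → Option (Fin n), Represents n d G g →
      (2 : ℝ≥0∞) / 3 ≤ probOut A g (· = true)) ∧
    (∀ G : SimpleGraph (Fin n), (∀ v : Fin n, (G.neighborSet v).ncard ≤ d) →
      ε < distGraphProp n d G P →
      ∀ g : Fin n × Fin d → Option (Fin n), Represents n d G g →
        (2 : ℝ≥0∞) / 3 ≤ probOut A g (· = false))

/-- One-sided graph tester: accepts every representation of every graph in `P` with
probability 1. -/
def OneSidedGraphTester (n d : ℕ) {k : ℕ} (P : Set (SimpleGraph (Fin n)))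
    (A : PMF (DetAlg (Fin n × Fin d) (Option (Fin n)) Bool k)) : Prop :=
  ∀ G ∈ P, ∀ g : Fin n × Fin d → Option (Fin n), Represents n d G g →
    probOut A g (· = true) = 1

end Adaptivity

namespace CFAux
open Adaptivity Finset
open scoped Classical

variable {n d : ℕ}

/-- geometric sum bound -/
lemma geom_le (hd2 : 2 ≤ d) : ∀ m : ℕ, ∑ j ∈ Finset.range (m + 1), d ^ j ≤ 2 * d ^ m := by
  intro m
  induction m with
  | zero => simp
  | succ m ih =>
      rw [Finset.sum_range_succ]
      have h1 : 2 * d ^ m ≤ d ^ (m + 1) := by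
        rw [pow_succ]; calc 2 * d ^ m = d ^ m * 2 := by ring
        _ ≤ d ^ m * d := Nat.mul_le_mul_left _ hd2
      omega

/-- the set of vertices pointed to by some slot of a vertex in `W` -/
def ans (f : Fin n × Fin d → Option (Fin n)) (W : Finset (Fin n)) : Finset (Fin n) :=
  (W ×ˢ (Finset.univ : Finset (Fin d))).biUnion fun x => (f x).toFinset

lemma mem_ans {f : Fin n × Fin d → Option (Fin n)} {W : Finset (Fin n)} {u : Fin n} :
    u ∈ ans f W ↔ ∃ v ∈ W, ∃ i, f (v, i) = some u := by
  simp only [ans, Finset.mem_biUnion, Finset.mem_product, Option.mem_toFinset, Option.mem_def]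
  constructor
  · rintro ⟨⟨v, i⟩, ⟨hv, -⟩, h⟩; exact ⟨v, hv, i, h⟩
  · rintro ⟨v, hv, i, h⟩; exact ⟨(v, i), ⟨hv, Finset.mem_univ _⟩, h⟩

lemma ans_card_le (f : Fin n × Fin d → Option (Fin n)) (W : Finset (Fin n)) :
    (ans f W).card ≤ W.card * d := by
  refine (Finset.card_biUnion_le).trans ?_
  have : ∀ x ∈ W ×ˢ (Finset.univ : Finset (Fin d)), ((f x).toFinset).card ≤ 1 := by
    intro x _; cases f x <;> simp
  calc ∑ x ∈ W ×ˢ (Finset.univ : Finset (Fin d)), ((f x).toFinset).card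
      ≤ ∑ _x ∈ W ×ˢ (Finset.univ : Finset (Fin d)), 1 := Finset.sum_le_sum this
    _ = W.card * d := by simp [Finset.card_product, mul_comm]

lemma ans_mono {f : Fin n × Fin d → Option (Fin n)} {A B : Finset (Fin n)} (h : A ⊆ B) :
    ans f A ⊆ ans f B := by
  intro u hu; rw [mem_ans] at hu ⊢; obtain ⟨v, hv, i, hi⟩ := hu; exact ⟨v, h hv, i, hi⟩

lemma ans_union {f : Fin n × Fin d → Option (Fin n)} {A B : Finset (Fin n)} :
    ans f (A ∪ B) = ans f A ∪ ans f B := by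
  ext u; simp only [Finset.mem_union, mem_ans]; constructor
  · rintro ⟨v, hv | hv, i, hi⟩
    · exact Or.inl ⟨v, hv, i, hi⟩
    · exact Or.inr ⟨v, hv, i, hi⟩
  · rintro (⟨v, hv, i, hi⟩ | ⟨v, hv, i, hi⟩)
    · exact ⟨v, Or.inl hv, i, hi⟩
    · exact ⟨v, Or.inr hv, i, hi⟩

/-- vertices reachable in `ℓ` answer-steps from `S` -/
def Rset (f : Fin n × Fin d → Option (Fin n)) (S : Finset (Fin n)) : ℕ → Finset (Fin n)
  | 0 => S
  | ℓ + 1 => Rset f S ℓ ∪ ans f (Rset f S ℓ)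

lemma Rset_subset_succ (f : Fin n × Fin d → Option (Fin n)) (S : Finset (Fin n)) (ℓ : ℕ) :
    Rset f S ℓ ⊆ Rset f S (ℓ + 1) := Finset.subset_union_left

lemma Rset_mono (f : Fin n × Fin d → Option (Fin n)) (S : Finset (Fin n)) {a b : ℕ} (h : a ≤ b) :
    Rset f S a ⊆ Rset f S b := by
  induction b with
  | zero => simpa [Nat.le_zero.mp h]
  | succ b ih =>
      rcases Nat.lt_or_ge a (b + 1) with h' | h'
      · exact (ih (by omega)).trans (Rset_subset_succ f S b)
      · have : a = b + 1 := by omega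
        subst this; exact subset_rfl

lemma Rset_card (hd2 : 2 ≤ d) (f : Fin n × Fin d → Option (Fin n)) (S : Finset (Fin n)) :
    ∀ ℓ : ℕ, (Rset f S (ℓ + 1) \ Rset f S ℓ).card ≤ S.card * d ^ (ℓ + 1) ∧
      (Rset f S ℓ).card ≤ 2 * S.card * d ^ ℓ := by
  intro ℓ
  induction ℓ with
  | zero =>
      constructor
      · have hsub : Rset f S 1 \ Rset f S 0 ⊆ ans f S := by
          intro x hx
          rw [Finset.mem_sdiff] at hx
          rcases Finset.mem_union.mp hx.1 with h | h
          · exact absurd h hx.2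
          · exact h
        refine (Finset.card_le_card hsub).trans ?_
        simpa [pow_one, mul_comm] using ans_card_le f S
      · simpa [Rset] using Nat.le_mul_of_pos_left S.card (by norm_num)
  | succ ℓ ih =>
      obtain ⟨h1, h2⟩ := ih
      have hsub : Rset f S (ℓ + 2) \ Rset f S (ℓ + 1) ⊆
          ans f (Rset f S (ℓ + 1) \ Rset f S ℓ) := by
        intro x hx
        rw [Finset.mem_sdiff] at hx
        have hx1 : x ∈ Rset f S (ℓ + 1) ∪ ans f (Rset f S (ℓ + 1)) := hx.1
        rcases Finset.mem_union.mp hx1 with h | h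
        · exact absurd h hx.2
        · have hdecomp : Rset f S (ℓ + 1) =
              Rset f S ℓ ∪ (Rset f S (ℓ + 1) \ Rset f S ℓ) :=
            (Finset.union_sdiff_of_subset (Rset_subset_succ f S ℓ)).symm
          rw [hdecomp, ans_union] at h
          rcases Finset.mem_union.mp h with h' | h'
          · exact absurd (Finset.mem_union.mpr (Or.inr h') : x ∈ Rset f S (ℓ + 1)) hx.2
          · exact h'
      constructor
      · refine (Finset.card_le_card hsub).trans ?_
        refine (ans_card_le _ _).trans ?_
        calc (Rset f S (ℓ + 1) \ Rset f S ℓ).card * d ≤ S.card * d ^ (ℓ + 1) * d :=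
              Nat.mul_le_mul_right _ h1
          _ = S.card * d ^ (ℓ + 2) := by ring
      · have : (Rset f S (ℓ + 1)).card ≤ (Rset f S ℓ).card +
            (Rset f S (ℓ + 1) \ Rset f S ℓ).card := by
          have hdecomp : Rset f S (ℓ + 1) =
              Rset f S ℓ ∪ (Rset f S (ℓ + 1) \ Rset f S ℓ) :=
            (Finset.union_sdiff_of_subset (Rset_subset_succ f S ℓ)).symm
          calc (Rset f S (ℓ + 1)).card
              = (Rset f S ℓ ∪ (Rset f S (ℓ + 1) \ Rset f S ℓ)).card := by rw [← hdecomp]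
            _ ≤ _ := Finset.card_union_le _ _
        refine this.trans ?_
        have key : 2 * d ^ ℓ ≤ d ^ (ℓ + 1) := by
          rw [pow_succ]
          calc 2 * d ^ ℓ = d ^ ℓ * 2 := by ring
            _ ≤ d ^ ℓ * d := Nat.mul_le_mul_left _ hd2
        calc (Rset f S ℓ).card + (Rset f S (ℓ + 1) \ Rset f S ℓ).card
            ≤ 2 * S.card * d ^ ℓ + S.card * d ^ (ℓ + 1) := Nat.add_le_add h2 h1
          _ = S.card * (2 * d ^ ℓ) + S.card * d ^ (ℓ + 1) := by ring
          _ ≤ S.card * d ^ (ℓ + 1) + S.card * d ^ (ℓ + 1) :=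
              Nat.add_le_add_right (Nat.mul_le_mul_left _ key) _
          _ = 2 * S.card * d ^ (ℓ + 1) := by ring
  
end CFAux
namespace CFAux
open Adaptivity Finset
open scoped Classical

variable {n d k : ℕ}

lemma view_eq_some_iff {D R : Type} [DecidableEq D] {f : D → R} {Q : Finset D} {x : D}
    {y : R} : view f Q x = some y ↔ x ∈ Q ∧ y = f x := by
  unfold view; split <;> simp_all [eq_comm]

lemma view_eq_none_iff {D R : Type} [DecidableEq D] {f : D → R} {Q : Finset D} {x : D} :
    view f Q x = none ↔ x ∉ Q := by
  unfold view; split <;> simp_all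

/-- the vertices named in the answers recorded in a partial view -/
noncomputable def ansF (φ : Fin n × Fin d → Option (Option (Fin n))) : Finset (Fin n) :=
  Finset.univ.filter fun u => ∃ x, φ x = some (some u)

/-- the graph revealed by a partial view -/
def Rev (φ : Fin n × Fin d → Option (Option (Fin n))) : SimpleGraph (Fin n) :=
  SimpleGraph.fromRel fun a b => ∃ i, φ (a, i) = some (some b)

/-- The BFS cycle-detection algorithm with start set `S`. -/
noncomputable def alg (hd : 0 < d) (t : ℕ) (S : Finset (Fin n)) (k : ℕ) :
    DetAlg (Fin n × Fin d) (Option (Fin n)) Bool k where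
  query := fun _ φ =>
    ((S ∪ ansF φ).filter fun u => φ (u, ⟨0, hd⟩) = none) ×ˢ Finset.univ
  out := fun φ => if CycleFreeUpTo (Rev φ) t then true else false

variable {hd : 0 < d} {t : ℕ} {S : Finset (Fin n)}
variable {f : Fin n × Fin d → Option (Fin n)}

/-- fresh vertices queried when current seen-vertex set is `W` -/
noncomputable def newV (hd : 0 < d) (S : Finset (Fin n)) (f : Fin n × Fin d → Option (Fin n))
    (W : Finset (Fin n)) : Finset (Fin n) :=
  (S ∪ ansF (view f (W ×ˢ Finset.univ))).filter
    fun u => view f (W ×ˢ Finset.univ) (u, ⟨0, hd⟩) = none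

/-- vertex-level recursion mirroring `DetAlg.seen` -/
noncomputable def seenV (hd : 0 < d) (S : Finset (Fin n)) (f : Fin n × Fin d → Option (Fin n)) :
    ℕ → Finset (Fin n)
  | 0 => ∅
  | ℓ + 1 => seenV hd S f ℓ ∪ newV hd S f (seenV hd S f ℓ)

lemma seen_eq (hd : 0 < d) (t : ℕ) (S : Finset (Fin n)) (f : Fin n × Fin d → Option (Fin n)) :
    ∀ ℓ : ℕ, ℓ ≤ k + 1 → (alg hd t S k).seen f ℓ = seenV hd S f ℓ ×ˢ Finset.univ
  | 0, _ => by simp [DetAlg.seen, seenV]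
  | ℓ + 1, h => by
      have ih := seen_eq hd t S f ℓ (by omega)
      have hℓ : ℓ < k + 1 := by omega
      simp only [DetAlg.seen, dif_pos hℓ, ih, seenV]
      rw [Finset.union_product]
      rfl

lemma mem_ansF_view {φW : Finset (Fin n)} {u : Fin n} :
    u ∈ ansF (view f (φW ×ˢ Finset.univ)) ↔ ∃ v ∈ φW, ∃ i, f (v, i) = some u := by
  simp only [ansF, Finset.mem_filter, Finset.mem_univ, true_and]
  constructor
  · rintro ⟨⟨v, i⟩, hx⟩
    rw [view_eq_some_iff] at hx
    obtain ⟨hmem, heq⟩ := hx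
    rw [Finset.mem_product] at hmem
    exact ⟨v, hmem.1, i, heq.symm⟩
  · rintro ⟨v, hv, i, hi⟩
    refine ⟨(v, i), ?_⟩
    rw [view_eq_some_iff]
    exact ⟨Finset.mem_product.mpr ⟨hv, Finset.mem_univ _⟩, hi.symm⟩

lemma mem_newV {W : Finset (Fin n)} {u : Fin n} :
    u ∈ newV hd S f W ↔ (u ∈ S ∨ ∃ v ∈ W, ∃ i, f (v, i) = some u) ∧ u ∉ W := by
  simp only [newV, Finset.mem_filter, Finset.mem_union, mem_ansF_view, view_eq_none_iff,
    Finset.mem_product, Finset.mem_univ, and_true]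

lemma newV_subset_Rset : ∀ ℓ : ℕ, seenV hd S f ℓ ⊆ Rset f S ℓ →
    newV hd S f (seenV hd S f ℓ) ⊆ Rset f S (ℓ + 1) := by
  intro ℓ hsub u hu
  rw [mem_newV] at hu
  rcases hu.1 with h | ⟨v, hv, i, hi⟩
  · exact Rset_mono f S (Nat.zero_le _) (show u ∈ Rset f S 0 from h)
  · exact Finset.mem_union.mpr (Or.inr (mem_ans.mpr ⟨v, hsub hv, i, hi⟩))

lemma seenV_subset_Rset (hd : 0 < d) (S : Finset (Fin n)) (f : Fin n × Fin d → Option (Fin n)) :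
    ∀ ℓ : ℕ, seenV hd S f ℓ ⊆ Rset f S ℓ
  | 0 => by simp [seenV]
  | ℓ + 1 => by
      have ih := seenV_subset_Rset hd S f ℓ
      simp only [seenV]
      exact Finset.union_subset (ih.trans (Rset_subset_succ f S ℓ)) (newV_subset_Rset ℓ ih)

lemma totalQueries_le (hd2 : 2 ≤ d) (hd : 0 < d) (t : ℕ) (S : Finset (Fin n)) (k : ℕ)
    (f : Fin n × Fin d → Option (Fin n)) :
    (alg hd t S k).totalQueries f ≤ 4 * S.card * d ^ (k + 2) := by
  have hq : ∀ ℓ : Fin (k + 1),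
      ((alg hd t S k).queries f ℓ).card ≤ 2 * S.card * d ^ (ℓ.1 + 1) * d := by
    intro ℓ
    have hs := seen_eq (k := k) hd t S f ℓ.1 (by omega)
    have : (alg hd t S k).queries f ℓ = newV hd S f (seenV hd S f ℓ.1) ×ˢ Finset.univ := by
      simp only [DetAlg.queries]
      rw [hs]
      rfl
    rw [this, Finset.card_product, Finset.card_univ, Fintype.card_fin]
    have hsubset : newV hd S f (seenV hd S f ℓ.1) ⊆ Rset f S (ℓ.1 + 1) :=
      newV_subset_Rset ℓ.1 (seenV_subset_Rset hd S f ℓ.1)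
    have := (Finset.card_le_card hsubset).trans (Rset_card hd2 f S (ℓ.1 + 1)).2
    exact Nat.mul_le_mul_right d this
  calc (alg hd t S k).totalQueries f
      ≤ ∑ ℓ : Fin (k + 1), 2 * S.card * d ^ (ℓ.1 + 1) * d := Finset.sum_le_sum fun ℓ _ => hq ℓ
    _ = ∑ ℓ ∈ Finset.range (k + 1), 2 * S.card * d ^ (ℓ + 1) * d :=
        Fin.sum_univ_eq_sum_range (fun j => 2 * S.card * d ^ (j + 1) * d) (k + 1)
    _ = 2 * S.card * d * ∑ ℓ ∈ Finset.range (k + 1), d ^ ℓ * d := by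
        rw [Finset.mul_sum]; refine Finset.sum_congr rfl fun ℓ _ => by ring
    _ = 2 * S.card * d * d * ∑ ℓ ∈ Finset.range (k + 1), d ^ ℓ := by
        rw [← Finset.sum_mul]; ring
    _ ≤ 2 * S.card * d * d * (2 * d ^ k) := Nat.mul_le_mul_left _ (geom_le hd2 k)
    _ = 4 * S.card * d ^ (k + 2) := by ring

end CFAux
namespace CFAux
open Adaptivity Finset SimpleGraph
open scoped Classical

variable {n d k : ℕ} {hd : 0 < d} {t : ℕ} {S : Finset (Fin n)}
variable {G : SimpleGraph (Fin n)} {g : Fin n × Fin d → Option (Fin n)}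

lemma Rev_le (hrep : Represents n d G g) (Q : Finset (Fin n × Fin d)) :
    Rev (view g Q) ≤ G := by
  intro a b hab
  rw [Rev, SimpleGraph.fromRel_adj] at hab
  obtain ⟨hne, h | h⟩ := hab
  · obtain ⟨i, hi⟩ := h
    rw [view_eq_some_iff] at hi
    exact (hrep.1 a b).mpr ⟨i, hi.2.symm⟩
  · obtain ⟨i, hi⟩ := h
    rw [view_eq_some_iff] at hi
    exact ((hrep.1 b a).mpr ⟨i, hi.2.symm⟩).symm

lemma cycleFree_mono {H : SimpleGraph (Fin n)} (hle : H ≤ G)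
    (hfree : CycleFreeUpTo G t) : CycleFreeUpTo H t := by
  intro v w hw
  have hedges : ∀ e ∈ w.edges, e ∈ G.edgeSet := fun e he =>
    SimpleGraph.edgeSet_mono hle (SimpleGraph.Walk.edges_subset_edgeSet w he)
  have := hfree v (w.transfer G hedges) (hw.transfer hedges)
  rwa [SimpleGraph.Walk.length_transfer] at this

lemma run_accept (hd : 0 < d) (t : ℕ) (S : Finset (Fin n)) (k : ℕ)
    (hrep : Represents n d G g) (hfree : CycleFreeUpTo G t) :
    (alg hd t S k).run g = true := by
  show (alg hd t S k).out (view g ((alg hd t S k).seen g (k + 1))) = true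
  show (if CycleFreeUpTo (Rev (view g ((alg hd t S k).seen g (k + 1)))) t
      then true else false) = true
  rw [if_pos (cycleFree_mono (Rev_le hrep _) hfree)]

lemma mem_seenV_one {v : Fin n} (hv : v ∈ S) : v ∈ seenV hd S g 1 := by
  simp only [seenV]
  exact Finset.mem_union.mpr (Or.inr (mem_newV.mpr ⟨Or.inl hv, by simp [seenV]⟩))

lemma seenV_mono {a b : ℕ} (h : a ≤ b) : seenV hd S g a ⊆ seenV hd S g b := by
  induction b with
  | zero => simpa [Nat.le_zero.mp h]
  | succ b ih =>
      rcases Nat.lt_or_ge a (b + 1) with h' | h'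
      · refine (ih (by omega)).trans ?_
        simp only [seenV]
        exact Finset.subset_union_left
      · have : a = b + 1 := by omega
        subst this; exact subset_rfl

lemma seenV_step {a b : Fin n} {m : ℕ} (hrep : Represents n d G g)
    (ha : a ∈ seenV hd S g m) (hadj : G.Adj a b) : b ∈ seenV hd S g (m + 1) := by
  obtain ⟨i, hi⟩ := (hrep.1 a b).mp hadj
  by_cases hb : b ∈ seenV hd S g m
  · exact seenV_mono (by omega) hb
  · simp only [seenV]
    exact Finset.mem_union.mpr (Or.inr (mem_newV.mpr ⟨Or.inr ⟨a, ha, i, hi⟩, hb⟩))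

lemma walk_cover (hrep : Represents n d G g) {a b : Fin n} (w : G.Walk a b) :
    ∀ m : ℕ, a ∈ seenV hd S g m → b ∈ seenV hd S g (m + w.length) := by
  induction w with
  | nil => intro m hm; simpa using hm
  | cons h p ih =>
      intro m hm
      have := ih (m + 1) (seenV_step hrep hm h)
      have harith : m + 1 + p.length = m + (SimpleGraph.Walk.cons h p).length := by
        rw [SimpleGraph.Walk.length_cons]; omega
      rwa [harith] at this

lemma edge_rev (hrep : Represents n d G g) {a b : Fin n}
    (ha : a ∈ seenV hd S g (k + 1)) (hadj : G.Adj a b) :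
    (Rev (view g (seenV hd S g (k + 1) ×ˢ Finset.univ))).Adj a b := by
  obtain ⟨i, hi⟩ := (hrep.1 a b).mp hadj
  rw [Rev, SimpleGraph.fromRel_adj]
  refine ⟨hadj.ne, Or.inl ⟨i, ?_⟩⟩
  rw [view_eq_some_iff]
  exact ⟨Finset.mem_product.mpr ⟨ha, Finset.mem_univ _⟩, hi.symm⟩

lemma walk_rev (hrep : Represents n d G g) {a b : Fin n} (w : G.Walk a b) :
    ∀ m : ℕ, a ∈ seenV hd S g m → m + w.length ≤ k + 2 →
    ∀ e ∈ w.edges, e ∈ (Rev (view g (seenV hd S g (k + 1) ×ˢ Finset.univ))).edgeSet := by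
  induction w with
  | nil => intro m _ _ e he; simp [SimpleGraph.Walk.edges_nil] at he
  | cons h p ih =>
      intro m hm hlen e he
      rw [SimpleGraph.Walk.length_cons] at hlen
      rw [SimpleGraph.Walk.edges_cons, List.mem_cons] at he
      rcases he with rfl | he'
      · exact (SimpleGraph.mem_edgeSet _).mpr (edge_rev hrep (seenV_mono (by omega) hm) h)
      · exact ih (m + 1) (seenV_step hrep hm h) (by omega) e he'

lemma walk_split {a b : Fin n} (w : G.Walk a b) :
    ∀ j : ℕ, j ≤ w.length →
      ∃ (c : Fin n) (w1 : G.Walk a c) (w2 : G.Walk c b), w1.length = j ∧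
        w2.length = w.length - j ∧ ∀ e ∈ w.edges, e ∈ w1.edges ∨ e ∈ w2.edges := by
  induction w with
  | nil =>
      intro j hj
      have : j = 0 := by simpa using hj
      subst this
      exact ⟨_, SimpleGraph.Walk.nil, SimpleGraph.Walk.nil, rfl, by simp, by simp⟩
  | @cons u x b h p ih =>
      intro j hj
      cases j with
      | zero =>
          exact ⟨u, SimpleGraph.Walk.nil, SimpleGraph.Walk.cons h p, rfl, by simp,
            fun e he => Or.inr he⟩
      | succ j =>
          rw [SimpleGraph.Walk.length_cons] at hj
          obtain ⟨c, w1, w2, h1, h2, h3⟩ := ih j (by omega)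
          refine ⟨c, SimpleGraph.Walk.cons h w1, w2, ?_, ?_, ?_⟩
          · rw [SimpleGraph.Walk.length_cons, h1]
          · rw [SimpleGraph.Walk.length_cons]; omega
          · intro e he
            rw [SimpleGraph.Walk.edges_cons, List.mem_cons] at he
            rcases he with rfl | he'
            · exact Or.inl (by rw [SimpleGraph.Walk.edges_cons]; exact List.mem_cons_self)
            · rcases h3 e he' with h' | h'
              · exact Or.inl (by rw [SimpleGraph.Walk.edges_cons]; exact List.mem_cons_of_mem _ h')
              · exact Or.inr h'

lemma run_reject {v : Fin n} (hrep : Represents n d G g) (hv : v ∈ S)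
    (w : G.Walk v v) (hc : w.IsCycle) (hlen : w.length ≤ t) (ht : t ≤ 2 * k + 2) :
    (alg hd t S k).run g = false := by
  set φ := view g (seenV hd S g (k + 1) ×ˢ Finset.univ) with hφ
  have hv1 : v ∈ seenV hd S g 1 := mem_seenV_one hv
  have hrev : ∀ e ∈ w.edges, e ∈ (Rev φ).edgeSet := by
    obtain ⟨c, w1, w2, h1, h2, h3⟩ := walk_split w (min (k + 1) w.length) (min_le_right _ _)
    have e1 := walk_rev (k := k) hrep w1 1 hv1 (by omega)
    have e2 := walk_rev (k := k) hrep w2.reverse 1 hv1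
      (by rw [SimpleGraph.Walk.length_reverse]; omega)
    intro e he
    rcases h3 e he with h' | h'
    · exact e1 e h'
    · exact e2 e (by rw [SimpleGraph.Walk.edges_reverse, List.mem_reverse]; exact h')
  have hnotfree : ¬ CycleFreeUpTo (Rev φ) t := by
    intro hfree
    have := hfree v (w.transfer _ hrev) (hc.transfer hrev)
    rw [SimpleGraph.Walk.length_transfer] at this
    omega
  show (alg hd t S k).out (view g ((alg hd t S k).seen g (k + 1))) = false
  rw [seen_eq hd t S g (k + 1) le_rfl]
  show (if CycleFreeUpTo (Rev φ) t then true else false) = false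
  rw [if_neg hnotfree]

end CFAux
namespace CFAux
open Adaptivity Finset SimpleGraph
open scoped Classical

variable {n d k t : ℕ}
variable {G : SimpleGraph (Fin n)} {g : Fin n × Fin d → Option (Fin n)}

/-- vertices lying on a cycle of length at most `t` -/
noncomputable def badF (G : SimpleGraph (Fin n)) (t : ℕ) : Finset (Fin n) :=
  Finset.univ.filter fun v => ∃ w : G.Walk v v, w.IsCycle ∧ w.length ≤ t

/-- `G` with all edges touching a bad vertex removed -/
def pruned (G : SimpleGraph (Fin n)) (t : ℕ) : SimpleGraph (Fin n) where
  Adj a b := G.Adj a b ∧ a ∉ badF G t ∧ b ∉ badF G t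
  symm := ⟨by rintro a b ⟨h, ha, hb⟩; exact ⟨h.symm, hb, ha⟩⟩
  loopless := ⟨by rintro a ⟨h, -⟩; exact h.ne rfl⟩

lemma pruned_le : pruned G t ≤ G := by intro a b h; exact h.1

lemma pruned_mem_prop (hdeg : ∀ v, (G.neighborSet v).ncard ≤ d) :
    pruned G t ∈ cycleFreeProp n d t := by
  constructor
  · intro v
    have hsub : (pruned G t).neighborSet v ⊆ G.neighborSet v := fun u h => h.1
    exact (Set.ncard_le_ncard hsub (Set.toFinite _)).trans (hdeg v)
  · intro v w hw
    by_contra hle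
    push_neg at hle
    have hedges : ∀ e ∈ w.edges, e ∈ G.edgeSet := fun e he =>
      SimpleGraph.edgeSet_mono pruned_le (SimpleGraph.Walk.edges_subset_edgeSet w he)
    have hvbad : v ∈ badF G t := Finset.mem_filter.mpr ⟨Finset.mem_univ _,
      ⟨w.transfer G hedges, hw.transfer hedges,
        by rw [SimpleGraph.Walk.length_transfer]; exact hle⟩⟩
    cases w with
    | nil => simpa using hw.three_le_length
    | cons h p => exact h.2.1 hvbad

lemma hamDist_nonneg {D R : Type} [DecidableEq D] [Fintype D] (f f' : D → R) :
    0 ≤ hamDist f f' := div_nonneg (Nat.cast_nonneg _) (Nat.cast_nonneg _)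

lemma graphDist_bddBelow :
    BddBelow {r : ℝ | ∃ g g' : Fin n × Fin d → Option (Fin n),
      Represents n d G g ∧ Represents n d (H : SimpleGraph (Fin n)) g' ∧ r = hamDist g g'} := by
  refine ⟨0, ?_⟩
  rintro r ⟨g, g', -, -, rfl⟩
  exact hamDist_nonneg g g'

lemma graphDist_nonneg (H : SimpleGraph (Fin n)) : 0 ≤ graphDist n d G H := by
  apply Real.sInf_nonneg
  rintro r ⟨g, g', -, -, rfl⟩
  exact hamDist_nonneg g g'

lemma distGraphProp_bddBelow (P : Set (SimpleGraph (Fin n))) :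
    BddBelow {r : ℝ | ∃ H ∈ P, r = graphDist n d G H} := by
  refine ⟨0, ?_⟩
  rintro r ⟨H, -, rfl⟩
  exact graphDist_nonneg H

lemma distGraphProp_le (P : Set (SimpleGraph (Fin n))) {H : SimpleGraph (Fin n)} (hH : H ∈ P)
    {g g' : Fin n × Fin d → Option (Fin n)} (hg : Represents n d G g)
    (hg' : Represents n d H g') :
    distGraphProp n d G P ≤ hamDist g g' := by
  refine le_trans (csInf_le (distGraphProp_bddBelow P) ⟨H, hH, rfl⟩) ?_
  exact csInf_le graphDist_bddBelow ⟨g, g', hg, hg', rfl⟩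

lemma dist_le_zero_of_nzero (hn : n = 0) (hrep : Represents n d G g) (t : ℕ) :
    distGraphProp n d G (cycleFreeProp n d t) ≤ 0 := by
  subst hn
  have hGP : G ∈ cycleFreeProp 0 d t := ⟨fun v => v.elim0, fun v => v.elim0⟩
  have hzero : hamDist g g = 0 := by
    have : {x : Fin 0 × Fin d | g x ≠ g x} = ∅ := by ext x; simp
    simp [hamDist, this]
  calc distGraphProp 0 d G (cycleFreeProp 0 d t) ≤ hamDist g g :=
        distGraphProp_le _ hGP hrep hrep
    _ = 0 := hzero

/-- the pruned representation -/
noncomputable def prunedRep (g : Fin n × Fin d → Option (Fin n)) (G : SimpleGraph (Fin n))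
    (t : ℕ) : Fin n × Fin d → Option (Fin n) := fun x =>
  match g x with
  | none => none
  | some u => if x.1 ∈ badF G t ∨ u ∈ badF G t then none else some u

lemma prunedRep_eq_some {x : Fin n × Fin d} {u : Fin n} :
    prunedRep g G t x = some u ↔
      g x = some u ∧ x.1 ∉ badF G t ∧ u ∉ badF G t := by
  unfold prunedRep
  cases hgx : g x with
  | none => simp
  | some u' =>
      by_cases hcond : x.1 ∈ badF G t ∨ u' ∈ badF G t
      · simp only [if_pos hcond]
        constructor
        · intro h; exact absurd h (by simp)
        · rintro ⟨h, h1, h2⟩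
          rw [Option.some_inj] at h
          subst h
          exact absurd hcond (by tauto)
      · simp only [if_neg hcond]
        push_neg at hcond
        constructor
        · intro h
          rw [Option.some_inj] at h
          subst h
          exact ⟨rfl, hcond.1, hcond.2⟩
        · rintro ⟨h, -, -⟩
          rw [Option.some_inj] at h
          subst h
          rfl

lemma prunedRep_represents (hrep : Represents n d G g) :
    Represents n d (pruned G t) (prunedRep g G t) := by
  constructor
  · intro v u
    constructor
    · rintro ⟨hadj, hv, hu⟩
      obtain ⟨i, hi⟩ := (hrep.1 v u).mp hadj
      exact ⟨i, prunedRep_eq_some.mpr ⟨hi, hv, hu⟩⟩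
    · rintro ⟨i, hi⟩
      obtain ⟨hg, hv, hu⟩ := prunedRep_eq_some.mp hi
      exact ⟨(hrep.1 v u).mpr ⟨i, hg⟩, hv, hu⟩
  · intro v i j u hi hj
    exact hrep.2 v i j u (prunedRep_eq_some.mp hi).1 (prunedRep_eq_some.mp hj).1

lemma slots_to_card_le (hdeg : ∀ v, (G.neighborSet v).ncard ≤ d)
    (hrep : Represents n d G g) (u : Fin n) :
    (Finset.univ.filter fun x : Fin n × Fin d => g x = some u).card ≤ d := by
  have htarget : (Finset.univ.filter fun v : Fin n => G.Adj u v).card ≤ d := by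
    have : G.neighborSet u = ↑(Finset.univ.filter fun v : Fin n => G.Adj u v) := by
      ext v; simp [SimpleGraph.mem_neighborSet]
    have h2 := hdeg u
    rwa [this, Set.ncard_coe_finset] at h2
  refine le_trans (Finset.card_le_card_of_injOn (fun x => x.1) ?_ ?_) htarget
  · intro x hx
    rw [Finset.mem_coe, Finset.mem_filter] at hx
    rw [Finset.mem_coe, Finset.mem_filter]
    exact ⟨Finset.mem_univ _, ((hrep.1 x.1 u).mpr ⟨x.2, hx.2⟩).symm⟩
  · intro x hx y hy hxy
    simp only [Finset.coe_filter, Set.mem_setOf_eq] at hx hy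
    change x.1 = y.1 at hxy
    have h2 : x.2 = y.2 := hrep.2 x.1 x.2 y.2 u hx.2 (by rw [hxy]; exact hy.2)
    cases x; cases y; simp_all

lemma hamDist_pruned_le (hn : 0 < n) (hd0 : 0 < d)
    (hdeg : ∀ v, (G.neighborSet v).ncard ≤ d) (hrep : Represents n d G g) :
    hamDist g (prunedRep g G t) ≤ 2 * (badF G t).card / n := by
  set B := badF G t with hB
  set Dset := Finset.univ.filter fun x : Fin n × Fin d => g x ≠ prunedRep g G t x with hD
  have hcard : Dset.card ≤ 2 * B.card * d := by
    have hsub : Dset ⊆ B ×ˢ Finset.univ ∪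
        Finset.univ.filter (fun x : Fin n × Fin d => ∃ u ∈ B, g x = some u) := by
      intro x hx
      rw [hD, Finset.mem_filter] at hx
      have hne := hx.2
      rcases hgx : g x with - | u
      · exact absurd (by simp [prunedRep, hgx] : g x = prunedRep g G t x) hne
      · by_cases hcond : x.1 ∈ B ∨ u ∈ B
        · rcases hcond with h | h
          · exact Finset.mem_union.mpr (Or.inl (Finset.mem_product.mpr ⟨h, Finset.mem_univ _⟩))
          · exact Finset.mem_union.mpr (Or.inr (Finset.mem_filter.mpr
              ⟨Finset.mem_univ _, u, h, hgx⟩))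
        · exfalso
          apply hne
          rw [hgx]
          exact (prunedRep_eq_some.mpr ⟨hgx, by tauto, by tauto⟩).symm
    refine le_trans (Finset.card_le_card hsub) ?_
    refine le_trans (Finset.card_union_le _ _) ?_
    have h1 : (B ×ˢ (Finset.univ : Finset (Fin d))).card = B.card * d := by
      simp [Finset.card_product]
    have h2 : (Finset.univ.filter (fun x : Fin n × Fin d => ∃ u ∈ B, g x = some u)).card ≤
        B.card * d := by
      have heq : Finset.univ.filter (fun x : Fin n × Fin d => ∃ u ∈ B, g x = some u) =
          B.biUnion fun u => Finset.univ.filter fun x : Fin n × Fin d => g x = some u := by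
        ext x
        simp only [Finset.mem_filter, Finset.mem_univ, true_and, Finset.mem_biUnion]
      rw [heq]
      refine le_trans Finset.card_biUnion_le ?_
      calc ∑ u ∈ B, (Finset.univ.filter fun x : Fin n × Fin d => g x = some u).card
          ≤ ∑ _u ∈ B, d := Finset.sum_le_sum fun u _ => slots_to_card_le hdeg hrep u
        _ = B.card * d := by simp [mul_comm]
    calc (B ×ˢ (Finset.univ : Finset (Fin d))).card +
          (Finset.univ.filter (fun x : Fin n × Fin d => ∃ u ∈ B, g x = some u)).card
        ≤ B.card * d + B.card * d := Nat.add_le_add (le_of_eq h1) h2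
      _ = 2 * B.card * d := by ring
  have hset : {x : Fin n × Fin d | g x ≠ prunedRep g G t x} = ↑Dset := by
    ext x; simp [hD]
  rw [hamDist, hset, Set.ncard_coe_finset]
  have hcardD : (Fintype.card (Fin n × Fin d) : ℝ) = (n : ℝ) * d := by
    simp [Fintype.card_prod]
  rw [hcardD]
  have hnd : (0:ℝ) < (n : ℝ) * d := by positivity
  rw [div_le_div_iff₀ hnd (by positivity : (0:ℝ) < (n:ℝ))]
  have : (Dset.card : ℝ) ≤ 2 * B.card * d := by exact_mod_cast hcard
  calc (Dset.card : ℝ) * n ≤ (2 * B.card * d) * n := by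
        apply mul_le_mul_of_nonneg_right this (by positivity)
    _ = 2 * B.card * (n * d) := by ring

lemma dist_le_bad (hn : 0 < n) (hd0 : 0 < d)
    (hdeg : ∀ v, (G.neighborSet v).ncard ≤ d) (hrep : Represents n d G g) (t : ℕ) :
    distGraphProp n d G (cycleFreeProp n d t) ≤ 2 * (badF G t).card / n := by
  refine le_trans (distGraphProp_le _ (pruned_mem_prop hdeg) hrep
    (prunedRep_represents hrep)) ?_
  exact hamDist_pruned_le hn hd0 hdeg hrep

end CFAux
namespace CFAux
open Adaptivity Finset SimpleGraph
open scoped Classical ENNReal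

variable {n d k : ℕ}

lemma two_thirds_le_one : (2:ℝ≥0∞)/3 ≤ 1 := by
  rw [ENNReal.div_le_iff_le_mul (Or.inl (by norm_num)) (Or.inl (by norm_num))]
  norm_num

lemma miss_prob_le {ε : ℝ} (hε0 : 0 < ε) (hε1 : ε ≤ 1) {n b s : ℕ} (hn : 0 < n)
    (hb : ε * n / 2 < b) (hbn : b ≤ n) (hs : (4 / ε) ≤ (s : ℝ)) :
    3 * ((n - b : ℕ) : ℝ) ^ s ≤ (n : ℝ) ^ s := by
  have hcast : ((n - b : ℕ) : ℝ) = (n : ℝ) - b := by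
    rw [Nat.cast_sub hbn]
  have hnpos : (0:ℝ) < n := by exact_mod_cast hn
  have h0 : (0:ℝ) ≤ (n:ℝ) - b := by
    have : (b:ℝ) ≤ n := by exact_mod_cast hbn
    linarith
  have hfrac : ((n:ℝ) - b) / n ≤ 1 - ε / 2 := by
    rw [div_le_iff₀ hnpos]
    nlinarith
  have h1 : (0:ℝ) ≤ 1 - ε/2 := by linarith
  have hpow : (((n:ℝ) - b)/n) ^ s ≤ (1 - ε/2) ^ s :=
    pow_le_pow_left₀ (by positivity) hfrac s
  have hexp : (1 - ε/2 : ℝ) ^ s ≤ Real.exp (-(ε/2)) ^ s :=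
    pow_le_pow_left₀ h1 (by linarith [Real.add_one_le_exp (-(ε/2))]) s
  have hexp2 : Real.exp (-(ε/2)) ^ s = Real.exp ((s:ℝ) * (-(ε/2))) :=
    (Real.exp_nat_mul _ s).symm
  have h2 : Real.exp ((s:ℝ) * (-(ε/2))) ≤ Real.exp (-2) := by
    apply Real.exp_le_exp.mpr
    have h4 : (4:ℝ) ≤ s * ε := by
      have := mul_le_mul_of_nonneg_right hs (le_of_lt hε0)
      rwa [div_mul_cancel₀ _ (ne_of_gt hε0)] at this
    nlinarith
  have h3 : Real.exp (-2 : ℝ) ≤ 1/3 := by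
    rw [Real.exp_neg]
    rw [inv_le_comm₀ (Real.exp_pos 2) (by norm_num)]
    have := Real.add_one_le_exp (2:ℝ)
    calc (1/3 : ℝ)⁻¹ = 3 := by norm_num
      _ ≤ Real.exp 2 := by linarith
  have key : (((n:ℝ) - b)/n) ^ s ≤ 1/3 := by
    refine le_trans hpow (le_trans hexp ?_)
    rw [hexp2]
    exact le_trans h2 h3
  rw [div_pow] at key
  rw [div_le_iff₀ (by positivity)] at key
  rw [hcast]
  nlinarith [pow_nonneg (le_of_lt hnpos) s]

lemma count_good {s : ℕ} (B : Finset (Fin n)) :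
    (Finset.univ.filter fun σ : Fin s → Fin n => ¬ ∃ i, σ i ∈ B).card =
      (n - B.card) ^ s := by
  have heq : (Finset.univ.filter fun σ : Fin s → Fin n => ¬ ∃ i, σ i ∈ B) =
      Finset.univ.filter fun σ : Fin s → Fin n => ∀ i, σ i ∈ Bᶜ := by
    ext σ; simp [Finset.mem_compl]
  rw [heq, ← Fintype.card_subtype]
  rw [Fintype.card_congr (Equiv.subtypePiEquivPi (p := fun _ b => b ∈ Bᶜ))]
  rw [Fintype.card_pi]
  simp [Fintype.card_coe, Finset.card_compl]

lemma unif_measure {α : Type} [Fintype α] [Nonempty α] (p : α → Prop) :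
    (PMF.uniformOfFintype α).toOuterMeasure {a | p a} =
      ((Finset.univ.filter p).card : ℝ≥0∞) / (Fintype.card α : ℝ≥0∞) := by
  rw [PMF.toOuterMeasure_apply, tsum_fintype]
  have h1 : ∀ a : α, Set.indicator {a | p a} (⇑(PMF.uniformOfFintype α)) a =
      if p a then ((Fintype.card α : ℝ≥0∞))⁻¹ else 0 := by
    intro a
    rw [Set.indicator_apply]
    simp only [Set.mem_setOf_eq]
    split <;> simp [PMF.uniformOfFintype_apply]
  rw [Finset.sum_congr rfl fun a _ => h1 a, ← Finset.sum_filter, Finset.sum_const,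
    nsmul_eq_mul, div_eq_mul_inv]

lemma card_filter_eq {α : Type} (s : Finset α) (p q : α → Prop)
    [DecidablePred p] [DecidablePred q] (h : ∀ a, p a ↔ q a) :
    (s.filter p).card = (s.filter q).card := by
  congr 1
  exact Finset.filter_congr fun x _ => h x

end CFAux
namespace CFAux
open Adaptivity Finset SimpleGraph
open scoped Classical ENNReal

lemma tester_exists (k d n : ℕ) (hd2 : 2 ≤ d) (ε : ℝ) (hε0 : 0 < ε) (hε1 : ε ≤ 1)
    (t : ℕ) (ht : t ≤ 2 * k + 2) :
    ∃ q : ℕ, (q : ℝ) ≤ 20 * (d : ℝ) ^ (k + 2) / ε ∧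
      ∃ A : PMF (DetAlg (Fin n × Fin d) (Option (Fin n)) Bool k),
        IsGraphTester n d (q : ℝ) ε (cycleFreeProp n d t) A ∧
          OneSidedGraphTester n d (cycleFreeProp n d t) A := by
  have hd : 0 < d := by omega
  set s : ℕ := ⌈(4:ℝ)/ε⌉₊ with hs
  refine ⟨4 * s * d ^ (k + 2), ?_, ?_⟩
  · have hsle : (s:ℝ) ≤ 5 / ε := by
      have h1 : (s:ℝ) < 4/ε + 1 := Nat.ceil_lt_add_one (by positivity)
      have h2 : (1:ℝ) ≤ 1/ε := by rw [le_div_iff₀ hε0]; linarith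
      calc (s:ℝ) ≤ 4/ε + 1 := le_of_lt h1
        _ ≤ 4/ε + 1/ε := by linarith
        _ = 5/ε := by ring
    have hdpow : (0:ℝ) ≤ (d:ℝ)^(k+2) := by positivity
    push_cast
    calc (4:ℝ) * s * d^(k+2) ≤ 4 * (5/ε) * d^(k+2) := by nlinarith
      _ = 20 * d^(k+2) / ε := by ring
  rcases Nat.eq_zero_or_pos n with hn | hn
  · refine ⟨PMF.pure (alg hd t ∅ k), ⟨?_, ?_, ?_⟩, ?_⟩
    · intro T hT f
      rw [PMF.support_pure, Set.mem_singleton_iff] at hT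
      subst hT
      have h1 := totalQueries_le hd2 hd t ∅ k f
      simp only [Finset.card_empty, Nat.mul_zero, Nat.zero_mul] at h1
      have h0 : (alg hd t ∅ k).totalQueries f = 0 := by omega
      rw [h0]
      exact_mod_cast Nat.zero_le _
    · intro G hG g hrep
      have hone : probOut (PMF.pure (alg hd t ∅ k)) g (· = true) = 1 := by
        rw [probOut, PMF.toOuterMeasure_apply_eq_one_iff]
        intro T hT
        rw [PMF.support_pure, Set.mem_singleton_iff] at hT
        subst hT
        exact run_accept hd t ∅ k hrep hG.2
      rw [hone]; exact two_thirds_le_one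
    · intro G hdeg hfar g hrep
      exact absurd hfar (not_lt.mpr (le_trans (dist_le_zero_of_nzero hn hrep t)
        (le_of_lt hε0)))
    · intro G hG g hrep
      rw [probOut, PMF.toOuterMeasure_apply_eq_one_iff]
      intro T hT
      rw [PMF.support_pure, Set.mem_singleton_iff] at hT
      subst hT
      exact run_accept hd t ∅ k hrep hG.2
  · haveI : Nonempty (Fin n) := ⟨⟨0, hn⟩⟩
    set μ := PMF.uniformOfFintype (Fin s → Fin n) with hμ
    set h : (Fin s → Fin n) → DetAlg (Fin n × Fin d) (Option (Fin n)) Bool k :=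
      fun σ => alg hd t (Finset.image σ Finset.univ) k with hh
    refine ⟨μ.map h, ⟨?_, ?_, ?_⟩, ?_⟩
    · intro T hT f
      rw [PMF.support_map] at hT
      obtain ⟨σ, -, rfl⟩ := hT
      have h1 := totalQueries_le hd2 hd t (Finset.image σ Finset.univ) k f
      have h2 : (Finset.image σ Finset.univ).card ≤ s := by
        refine le_trans (Finset.card_image_le) ?_
        simp
      have h3 : (h σ).totalQueries f ≤ 4 * s * d^(k+2) := by
        refine le_trans h1 ?_
        exact Nat.mul_le_mul_right _ (Nat.mul_le_mul_left _ h2)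
      exact_mod_cast h3
    · intro G hG g hrep
      have hone : probOut (μ.map h) g (· = true) = 1 := by
        rw [probOut, PMF.toOuterMeasure_apply_eq_one_iff]
        intro T hT
        rw [PMF.support_map] at hT
        obtain ⟨σ, -, rfl⟩ := hT
        exact run_accept hd t _ k hrep hG.2
      rw [hone]; exact two_thirds_le_one
    · intro G hdeg hfar g hrep
      set B := badF G t with hB
      have hbn : B.card ≤ n := le_trans (Finset.card_le_univ B) (by simp)
      have hεb : ε * n / 2 < (B.card : ℝ) := by
        have hle := dist_le_bad hn hd hdeg hrep t
        have hlt : ε < 2 * B.card / n := lt_of_lt_of_le hfar hle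
        have hnpos : (0:ℝ) < n := by exact_mod_cast hn
        rw [lt_div_iff₀ hnpos] at hlt
        linarith
      have hreal := miss_prob_le hε0 hε1 hn hεb hbn (Nat.le_ceil _)
      have hnat : 3 * (n - B.card)^s ≤ n^s := by exact_mod_cast hreal
      set E : Set (Fin s → Fin n) := {σ | ∃ i, σ i ∈ B} with hE
      have hdet : E ⊆ h ⁻¹' {T | T.run g = false} := by
        rintro σ ⟨i, hi⟩
        have hbad := (Finset.mem_filter.mp hi).2
        obtain ⟨w, hw, hwlen⟩ := hbad
        show (alg hd t (Finset.image σ Finset.univ) k).run g = false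
        exact run_reject hrep (Finset.mem_image_of_mem σ (Finset.mem_univ i)) w hw hwlen ht
      rw [probOut, PMF.toOuterMeasure_map_apply]
      refine le_trans ?_ (PMF.toOuterMeasure_mono μ
        (le_trans Set.inter_subset_left hdet : E ∩ μ.support ⊆ _))
      rw [hE, hμ, unif_measure (fun σ : Fin s → Fin n => ∃ i, σ i ∈ B)]
      have hpart := Finset.card_filter_add_card_filter_not
        (s := (Finset.univ : Finset (Fin s → Fin n))) (fun σ : Fin s → Fin n => ∃ i, σ i ∈ B)
      have hcardgood := count_good (n := n) (s := s) B
      have hcardall : (Finset.univ : Finset (Fin s → Fin n)).card = n^s := by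
        simp [Fintype.card_fun]
      have hNcard : (Fintype.card (Fin s → Fin n)) = n^s := by simp [Fintype.card_fun]
      rw [hNcard]
      have hcc : (@Finset.filter (Fin s → Fin n)
          (fun σ : Fin s → Fin n => ∃ i, σ i ∈ B)
          (fun a : Fin s → Fin n => Classical.propDecidable (∃ i, a i ∈ B))
          Finset.univ).card =
          (Finset.univ.filter (fun σ : Fin s → Fin n => ∃ i, σ i ∈ B)).card :=
        @card_filter_eq (Fin s → Fin n) Finset.univ _ _
          (fun a : Fin s → Fin n => Classical.propDecidable (∃ i, a i ∈ B)) _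
          fun a => Iff.rfl
      rw [hcc]
      obtain ⟨c, hc⟩ : ∃ c, (Finset.univ.filter
          (fun σ : Fin s → Fin n => ∃ i, σ i ∈ B)).card = c := ⟨_, rfl⟩
      rw [hc]
      rw [hc] at hpart
      have hkey : 2 * n^s ≤ 3 * c := by
        have h1 : c + (n - B.card)^s = n^s := by
          rw [← hcardgood, ← hcardall]
          exact hpart
        clear hdet hE hμ hh hcc hc hpart hcardgood hcardall
        clear E μ h
        omega
      have hnspos : 0 < n^s := pow_pos hn s
      have hN0 : ((n^s : ℕ) : ℝ≥0∞) ≠ 0 := Nat.cast_ne_zero.mpr (Nat.pos_iff_ne_zero.mp hnspos)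
      have hNt : ((n^s : ℕ) : ℝ≥0∞) ≠ ⊤ := ENNReal.natCast_ne_top _
      have hstep : (2:ℝ≥0∞)/3 * ((n^s : ℕ) : ℝ≥0∞) = 2 * ((n^s : ℕ) : ℝ≥0∞) / 3 := by
        rw [div_eq_mul_inv, div_eq_mul_inv]; ring
      rw [ENNReal.le_div_iff_mul_le (Or.inl hN0) (Or.inl hNt), hstep,
        ENNReal.div_le_iff_le_mul (Or.inl (by norm_num)) (Or.inl (by norm_num))]
      calc (2:ℝ≥0∞) * (n^s : ℕ) = ((2 * n^s : ℕ) : ℝ≥0∞) := by push_cast; ring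
        _ ≤ ((3 * c : ℕ) : ℝ≥0∞) := by exact_mod_cast hkey
        _ = (c:ℝ≥0∞) * 3 := by push_cast; ring
    · intro G hG g hrep
      rw [probOut, PMF.toOuterMeasure_apply_eq_one_iff]
      intro T hT
      rw [PMF.support_map] at hT
      obtain ⟨σ, -, rfl⟩ := hT
      exact run_accept hd t _ k hrep hG.2

end CFAux
open Adaptivity in
/-- There is an absolute constant `C > 0` such that for every `k ≥ 0`,
`d ≥ 2`, `n` and `ε ∈ (0,1]`, both `(2k+1)`-cycle-freeness and `(2k+2)`-cycle-freeness
of `n`-vertex graphs of maximum degree at most `d` admit a one-sided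
`(k, q)`-round-adaptive `ε`-tester with `q ≤ C·d^{k+2}/ε` in the bounded-degree graph
model. -/
theorem cycleFreeness_upper_bound :
    ∃ C : ℝ, 0 < C ∧
      ∀ k d n : ℕ, 2 ≤ d → ∀ ε : ℝ, 0 < ε → ε ≤ 1 →
        (∃ q : ℕ, (q : ℝ) ≤ C * (d : ℝ) ^ (k + 2) / ε ∧
          ∃ A : PMF (DetAlg (Fin n × Fin d) (Option (Fin n)) Bool k),
            IsGraphTester n d (q : ℝ) ε (cycleFreeProp n d (2 * k + 1)) A ∧
              OneSidedGraphTester n d (cycleFreeProp n d (2 * k + 1)) A) ∧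
        (∃ q : ℕ, (q : ℝ) ≤ C * (d : ℝ) ^ (k + 2) / ε ∧
          ∃ A : PMF (DetAlg (Fin n × Fin d) (Option (Fin n)) Bool k),
            IsGraphTester n d (q : ℝ) ε (cycleFreeProp n d (2 * k + 2)) A ∧
              OneSidedGraphTester n d (cycleFreeProp n d (2 * k + 2)) A) := by
  refine ⟨20, by norm_num, fun k d n hd2 ε hε0 hε1 => ?_⟩
  exact ⟨CFAux.tester_exists k d n hd2 ε hε0 hε1 (2 * k + 1) (by omega),
    CFAux.tester_exists k d n hd2 ε hε0 hε1 (2 * k + 2) (by omega)⟩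
end

section
/- There exists an absolute constant c > 0 such that for every prime n ≥ 3 and every integer k with 0 ≤ k ≤ c·(n/log n)^{1/3}, every randomized (k,q)-round-adaptive linear decision tree algorithm that computes the (k+1)-iterated address function f_{k+1} satisfies q ≥ c·n/((k+1)²·log n). -/
open scoped ENNReal BigOperators

namespace Adaptivity

/-- The iterated pointer values `g_j(x)` of the paper: `g_0(x) = x_1` and
`g_{j+1}(x) = x_{g_j(x)+1}` (1-based indexing, i.e. `g_{j+1}(x)` is the coordinate of
`x` at the 0-based index `⌜g_j(x)⌝`).  (The `dite` branches are junk values which never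
occur when `n > 0`.) -/
def gIter (n : ℕ) (x : Fin n → ZMod n) : ℕ → ZMod n
  | 0 => if h : 0 < n then x ⟨0, h⟩ else 0
  | j + 1 =>
      if h : (gIter n x j).val < n then x ⟨(gIter n x j).val, h⟩ else 0

/-- The `k`-iterated address function `f_k : 𝔽_n^n → {0,1}`: `f_k(x) = 1` iff
`g_k(x)` is even (i.e. its representative in `{0,…,n−1}` is even). -/
def fAddr (n : ℕ) (x : Fin n → ZMod n) (k : ℕ) : Bool :=
  (gIter n x k).val % 2 == 0

end Adaptivity

namespace Adaptivity

/-- The linear-query oracle of a hidden input `x ∈ 𝔽_n^n`: on query a vector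
`L ∈ 𝔽_n^n`, it answers the inner product `⟨L, x⟩`. -/
def linOracle (n : ℕ) (x : Fin n → ZMod n) : (Fin n → ZMod n) → ZMod n :=
  fun L => ∑ i : Fin n, L i * x i

/-- `A` is a randomized `(k,q)`-round-adaptive linear decision tree algorithm computing
`f : 𝔽_n^n → {0,1}`: on every hidden input `x` it makes at most `q` linear queries and
outputs `f x` with probability at least `2/3`. -/
def ComputesLDT (n : ℕ) {k : ℕ} (q : ℝ)
    (A : PMF (DetAlg (Fin n → ZMod n) (ZMod n) Bool k))
    (f : (Fin n → ZMod n) → Bool) : Prop :=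
  (∀ T ∈ A.support, ∀ x : Fin n → ZMod n,
      (T.totalQueries (linOracle n x) : ℝ) ≤ q) ∧
    (∀ x : Fin n → ZMod n, (2 : ℝ≥0∞) / 3 ≤ probOut A (linOracle n x) (· = f x))

end Adaptivity

namespace Adaptivity

set_option linter.unusedSectionVars false

section Aux
variable {n : ℕ} [NeZero n]

/-- dot product -/
def dotp (v x : Fin n → ZMod n) : ZMod n := ∑ i, v i * x i

lemma linOracle_eq_dotp (x v : Fin n → ZMod n) : linOracle n x v = dotp v x := rfl

/-- standard basis vector -/
def epi (i : Fin n) : Fin n → ZMod n := Pi.single i 1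

lemma dotp_epi (i : Fin n) (x : Fin n → ZMod n) : dotp (epi i) x = x i := by
  classical
  unfold dotp epi
  rw [Finset.sum_eq_single i]
  · simp
  · intro b _ hb; simp [Pi.single_apply, hb]
  · simp

lemma epi_injective (hn : 2 ≤ n) : Function.Injective (epi (n := n)) := by
  haveI : Fact (1 < n) := ⟨hn⟩
  intro i j h
  by_contra hij
  have := congrFun h i
  rw [epi, epi, Pi.single_apply, Pi.single_apply, if_pos rfl, if_neg hij] at this
  exact one_ne_zero this

lemma dotp_add (v x y : Fin n → ZMod n) : dotp v (x + y) = dotp v x + dotp v y := by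
  unfold dotp; rw [← Finset.sum_add_distrib]; exact Finset.sum_congr rfl fun i _ => by
    simp [mul_add]

lemma dotp_smul (v : Fin n → ZMod n) (c : ZMod n) (x : Fin n → ZMod n) :
    dotp v (c • x) = c * dotp v x := by
  unfold dotp; rw [Finset.mul_sum]; exact Finset.sum_congr rfl fun i _ => by
    simp [Pi.smul_apply, smul_eq_mul]; ring

/-- pointer chain indices -/
def idx (x : Fin n → ZMod n) : ℕ → Fin n
  | 0 => ⟨0, Nat.pos_of_ne_zero (NeZero.ne n)⟩
  | j + 1 => ⟨(x (idx x j)).val, ZMod.val_lt _⟩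

lemma gIter_eq_idx (x : Fin n → ZMod n) (j : ℕ) : gIter n x j = x (idx x j) := by
  induction j with
  | zero =>
      have h : 0 < n := Nat.pos_of_ne_zero (NeZero.ne n)
      simp [gIter, idx, dif_pos h]
  | succ j ih =>
      have h : (gIter n x j).val < n := ZMod.val_lt _
      simp only [gIter, dif_pos h]
      congr 1
      exact Fin.ext (by simp [idx, ih])

end Aux

section Cells
variable {n k : ℕ} [NeZero n] (T : DetAlg (Fin n → ZMod n) (ZMod n) Bool k)

lemma seen_mono (f : (Fin n → ZMod n) → ZMod n) {ℓ m : ℕ} (h : ℓ ≤ m) :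
    T.seen f ℓ ⊆ T.seen f m := by
  induction m with
  | zero => exact Nat.le_zero.mp h ▸ Finset.Subset.refl _
  | succ m ih =>
      rcases Nat.lt_or_ge ℓ (m+1) with h' | h'
      · exact (ih (Nat.lt_succ_iff.mp h')).trans (by
          simp only [DetAlg.seen]; exact Finset.subset_union_left)
      · have : ℓ = m + 1 := le_antisymm h h'
        exact this ▸ Finset.Subset.refl _

lemma seen_subset_biUnion (f : (Fin n → ZMod n) → ZMod n) {m : ℕ} (hm : m ≤ k + 1) :
    T.seen f m ⊆ Finset.univ.biUnion (fun ℓ => T.queries f ℓ) := by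
  induction m with
  | zero => simp [DetAlg.seen]
  | succ m ih =>
      have hmk : m < k + 1 := hm
      simp only [DetAlg.seen, dif_pos hmk]
      refine Finset.union_subset (ih (le_of_lt hmk)) ?_
      intro v hv
      exact Finset.mem_biUnion.mpr ⟨⟨m, hmk⟩, Finset.mem_univ _, hv⟩

lemma seen_card_le (f : (Fin n → ZMod n) → ZMod n) {m : ℕ} (hm : m ≤ k + 1) :
    (T.seen f m).card ≤ T.totalQueries f := by
  refine le_trans (Finset.card_le_card (seen_subset_biUnion T f hm)) ?_
  refine le_trans (Finset.card_biUnion_le) (le_of_eq rfl)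

lemma seen_eq_of_agree (f f' : (Fin n → ZMod n) → ZMod n) :
    ∀ m, (∀ v ∈ T.seen f m, f' v = f v) → T.seen f' m = T.seen f m := by
  intro m
  induction m with
  | zero => intro _; rfl
  | succ m ih =>
      intro h
      have hm : ∀ v ∈ T.seen f m, f' v = f v := fun v hv =>
        h v (seen_mono T f (Nat.le_succ m) hv)
      have e1 := ih hm
      have eview : view f' (T.seen f' m) = view f (T.seen f m) := by
        rw [e1]; funext v; unfold view
        by_cases hv : v ∈ T.seen f m
        · rw [if_pos hv, if_pos hv, hm v hv]
        · rw [if_neg hv, if_neg hv]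
      rw [e1] at eview
      simp only [DetAlg.seen, e1, eview]

lemma view_eq_of_agree (f f' : (Fin n → ZMod n) → ZMod n) (m : ℕ)
    (h : ∀ v ∈ T.seen f m, f' v = f v) :
    view f' (T.seen f' m) = view f (T.seen f m) := by
  rw [seen_eq_of_agree T f f' m h]; funext v; unfold view
  by_cases hv : v ∈ T.seen f m
  · rw [if_pos hv, if_pos hv, h v hv]
  · rw [if_neg hv, if_neg hv]

lemma idx_eq_of_g (x' x : Fin n → ZMod n) {m : ℕ}
    (h : ∀ t < m, gIter n x' t = gIter n x t) : ∀ t ≤ m, idx x' t = idx x t := by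
  intro t ht
  induction t with
  | zero => rfl
  | succ t ih =>
      have ht' : t < m := ht
      have hidx := ih (le_of_lt ht')
      show (⟨(x' (idx x' t)).val, _⟩ : Fin n) = ⟨(x (idx x t)).val, _⟩
      have : x' (idx x' t) = x (idx x t) :=
        (gIter_eq_idx x' t).symm.trans ((h t ht').trans (gIter_eq_idx x t))
      exact Fin.ext (by simp [this])

lemma g_of_coords (x' x : Fin n → ZMod n) {m : ℕ}
    (h : ∀ t < m, x' (idx x t) = x (idx x t)) :
    ∀ t < m, gIter n x' t = gIter n x t := by
  intro t
  induction t using Nat.strong_induction_on with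
  | _ t ih =>
      intro htm
      have hidx : idx x' t = idx x t :=
        idx_eq_of_g x' x (fun s hs => ih s hs (lt_trans hs htm)) t le_rfl
      rw [gIter_eq_idx, gIter_eq_idx, hidx]
      exact h t htm

lemma coords_of_g (x' x : Fin n → ZMod n) {m : ℕ}
    (h : ∀ t < m, gIter n x' t = gIter n x t) :
    ∀ t < m, x' (idx x t) = x (idx x t) := by
  intro t ht
  have hidx : idx x' t = idx x t := idx_eq_of_g x' x h t (le_of_lt ht)
  rw [← hidx]
  exact (gIter_eq_idx x' t).symm.trans ((h t ht).trans ((gIter_eq_idx x t).trans (by rw [hidx])))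

/-- The linear constraints defining a cell at level `m`. -/
def Scell (x : Fin n → ZMod n) (m : ℕ) : Finset (Fin n → ZMod n) :=
  T.seen (linOracle n x) m ∪
    (Finset.univ : Finset (Fin m)).image (fun t => epi (idx x t.1))

lemma cell_iff (x₀ x' : Fin n → ZMod n) (m : ℕ) :
    (∀ v ∈ Scell T x₀ m, dotp v x' = dotp v x₀) ↔
      (T.seen (linOracle n x') m = T.seen (linOracle n x₀) m ∧
       view (linOracle n x') (T.seen (linOracle n x') m) =
         view (linOracle n x₀) (T.seen (linOracle n x₀) m) ∧
       ∀ t < m, gIter n x' t = gIter n x₀ t) := by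
  constructor
  · intro h
    have hseenc : ∀ v ∈ T.seen (linOracle n x₀) m, linOracle n x' v = linOracle n x₀ v := by
      intro v hv
      rw [linOracle_eq_dotp, linOracle_eq_dotp]
      exact h v (Finset.mem_union_left _ hv)
    have hg : ∀ t < m, gIter n x' t = gIter n x₀ t := by
      refine g_of_coords x' x₀ ?_
      intro t ht
      have := h (epi (idx x₀ t)) (Finset.mem_union_right _
        (Finset.mem_image.mpr ⟨⟨t, ht⟩, Finset.mem_univ _, rfl⟩))
      rwa [dotp_epi, dotp_epi] at this
    exact ⟨seen_eq_of_agree T _ _ m hseenc, view_eq_of_agree T _ _ m hseenc, hg⟩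
  · rintro ⟨hs, hv, hg⟩ v hv'
    rcases Finset.mem_union.mp hv' with h1 | h2
    · have hv1 : v ∈ T.seen (linOracle n x') m := hs ▸ h1
      have := congrFun hv v
      unfold view at this
      rw [if_pos hv1, if_pos h1] at this
      have := Option.some.inj this
      rwa [linOracle_eq_dotp, linOracle_eq_dotp] at this
    · rcases Finset.mem_image.mp h2 with ⟨t, _, rfl⟩
      rw [dotp_epi, dotp_epi]
      exact coords_of_g x' x₀ hg t.1 t.2

lemma seen_succ_eq_of_cell (x₀ x' : Fin n → ZMod n) (m : ℕ)
    (h : ∀ v ∈ Scell T x₀ m, dotp v x' = dotp v x₀) :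
    T.seen (linOracle n x') (m + 1) = T.seen (linOracle n x₀) (m + 1) := by
  obtain ⟨hs, hv, _⟩ := (cell_iff T x₀ x' m).mp h
  rw [hs] at hv
  simp only [DetAlg.seen, hs, hv]

end Cells

section LinAlg
variable {n : ℕ} [Fact (Nat.Prime n)]

lemma nz_of_prime : NeZero n := ⟨(Fact.out : Nat.Prime n).ne_zero⟩

attribute [local instance] nz_of_prime

open Submodule in
lemma exists_dual_vec (S : Finset (Fin n → ZMod n)) (v0 : Fin n → ZMod n)
    (h : v0 ∉ Submodule.span (ZMod n) (S : Set (Fin n → ZMod n))) :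
    ∃ w, (∀ v ∈ S, dotp v w = 0) ∧ dotp v0 w = 1 := by
  classical
  set p := Submodule.span (ZMod n) (S : Set (Fin n → ZMod n)) with hp
  have h0 : p.mkQ v0 ≠ 0 := by
    intro h0
    rw [Submodule.mkQ_apply] at h0
    exact h ((Submodule.Quotient.mk_eq_zero p).mp h0)
  obtain ⟨ψ, hψ⟩ : ∃ ψ : Module.Dual (ZMod n) ((Fin n → ZMod n) ⧸ p), ψ (p.mkQ v0) ≠ 0 := by
    by_contra hc
    push_neg at hc
    exact h0 ((Module.forall_dual_apply_eq_zero_iff (ZMod n) _).mp hc)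
  set φ : (Fin n → ZMod n) →ₗ[ZMod n] ZMod n := ψ.comp p.mkQ with hφ
  have hφ0 : φ v0 ≠ 0 := hψ
  set w : Fin n → ZMod n := fun i => (φ v0)⁻¹ * φ (fun j => if i = j then 1 else 0) with hw
  have key : ∀ v, dotp v w = (φ v0)⁻¹ * φ v := by
    intro v
    unfold dotp
    rw [LinearMap.pi_apply_eq_sum_univ φ v, Finset.mul_sum]
    refine Finset.sum_congr rfl fun i _ => ?_
    rw [hw]; simp [smul_eq_mul]; ring
  refine ⟨w, fun v hv => ?_, ?_⟩
  · rw [key]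
    have : φ v = 0 := by
      rw [hφ]
      simp only [LinearMap.comp_apply, Submodule.mkQ_apply]
      rw [(Submodule.Quotient.mk_eq_zero p).mpr (Submodule.subset_span hv)]
      exact map_zero ψ
    rw [this, mul_zero]
  · rw [key, inv_mul_cancel₀ hφ0]

lemma slice_card_const (S : Finset (Fin n → ZMod n)) (b : (Fin n → ZMod n) → ZMod n)
    {v0 : Fin n → ZMod n} (w : Fin n → ZMod n)
    (hw0 : ∀ v ∈ S, dotp v w = 0) (hw1 : dotp v0 w = 1) (a a' : ZMod n) :
    (Finset.univ.filter
        (fun x => (∀ v ∈ S, dotp v x = b v) ∧ dotp v0 x = a)).card =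
      (Finset.univ.filter
        (fun x => (∀ v ∈ S, dotp v x = b v) ∧ dotp v0 x = a')).card := by
  classical
  refine Finset.card_bij' (fun x _ => x + (a' - a) • w) (fun y _ => y + (a - a') • w)
    ?_ ?_ ?_ ?_
  · intro x hx
    rw [Finset.mem_filter] at hx ⊢
    obtain ⟨_, hc, hv⟩ := hx
    refine ⟨Finset.mem_univ _, fun v hv' => ?_, ?_⟩
    · rw [dotp_add, dotp_smul, hw0 v hv', mul_zero, add_zero]; exact hc v hv'
    · rw [dotp_add, dotp_smul, hw1, mul_one, hv]; ring
  · intro y hy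
    rw [Finset.mem_filter] at hy ⊢
    obtain ⟨_, hc, hv⟩ := hy
    refine ⟨Finset.mem_univ _, fun v hv' => ?_, ?_⟩
    · rw [dotp_add, dotp_smul, hw0 v hv', mul_zero, add_zero]; exact hc v hv'
    · rw [dotp_add, dotp_smul, hw1, mul_one, hv]; ring
  · intro x _
    show x + (a' - a) • w + (a - a') • w = x
    rw [add_assoc, ← add_smul]
    simp
  · intro y _
    show y + (a - a') • w + (a' - a) • w = y
    rw [add_assoc, ← add_smul]
    simp

lemma cell_count (S : Finset (Fin n → ZMod n)) (b : (Fin n → ZMod n) → ZMod n)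
    (v0 : Fin n → ZMod n)
    (hv0 : v0 ∉ Submodule.span (ZMod n) (S : Set (Fin n → ZMod n)))
    (p : ZMod n → Prop) [DecidablePred p] :
    (Finset.univ.filter
        (fun x => (∀ v ∈ S, dotp v x = b v) ∧ p (dotp v0 x))).card * n =
      (Finset.univ.filter p).card *
        (Finset.univ.filter (fun x : Fin n → ZMod n => ∀ v ∈ S, dotp v x = b v)).card := by
  classical
  obtain ⟨w, hw0, hw1⟩ := exists_dual_vec S v0 hv0
  have hconst : ∀ a : ZMod n,
      (Finset.univ.filter (fun x => (∀ v ∈ S, dotp v x = b v) ∧ dotp v0 x = a)).card =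
      (Finset.univ.filter (fun x => (∀ v ∈ S, dotp v x = b v) ∧ dotp v0 x = 0)).card :=
    fun a => slice_card_const S b w hw0 hw1 a 0
  have hA : (Finset.univ.filter
      (fun x : Fin n → ZMod n => ∀ v ∈ S, dotp v x = b v)).card =
      n * (Finset.univ.filter
        (fun x => (∀ v ∈ S, dotp v x = b v) ∧ dotp v0 x = 0)).card := by
    rw [Finset.card_eq_sum_card_fiberwise
      (f := fun x : Fin n → ZMod n => dotp v0 x) (t := Finset.univ)
      (fun x _ => Finset.mem_univ _)]
    have e1 : ∀ a : ZMod n,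
        ((Finset.univ.filter (fun x : Fin n → ZMod n => ∀ v ∈ S, dotp v x = b v)).filter
          (fun x => dotp v0 x = a)).card =
        (Finset.univ.filter
          (fun x => (∀ v ∈ S, dotp v x = b v) ∧ dotp v0 x = 0)).card := by
      intro a
      rw [Finset.filter_filter]
      exact hconst a
    rw [Finset.sum_congr rfl (fun a _ => e1 a), Finset.sum_const, Finset.card_univ,
      ZMod.card, smul_eq_mul]
  have hB : (Finset.univ.filter
      (fun x => (∀ v ∈ S, dotp v x = b v) ∧ p (dotp v0 x))).card =
      (Finset.univ.filter p).card *
        (Finset.univ.filter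
          (fun x => (∀ v ∈ S, dotp v x = b v) ∧ dotp v0 x = 0)).card := by
    rw [Finset.card_eq_sum_card_fiberwise
      (f := fun x : Fin n → ZMod n => dotp v0 x) (t := Finset.univ.filter p)
      (fun x hx => Finset.mem_filter.mpr ⟨Finset.mem_univ _,
        (Finset.mem_filter.mp hx).2.2⟩)]
    have e1 : ∀ a ∈ Finset.univ.filter p,
        ((Finset.univ.filter
          (fun x => (∀ v ∈ S, dotp v x = b v) ∧ p (dotp v0 x))).filter
            (fun x => dotp v0 x = a)).card =
        (Finset.univ.filter
          (fun x => (∀ v ∈ S, dotp v x = b v) ∧ dotp v0 x = 0)).card := by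
      intro a ha
      have hpa : p a := (Finset.mem_filter.mp ha).2
      rw [Finset.filter_filter, ← hconst a]
      congr 1
      ext x
      simp only [Finset.mem_filter, Finset.mem_univ, true_and]
      constructor
      · rintro ⟨⟨h1, _⟩, h3⟩; exact ⟨h1, h3⟩
      · rintro ⟨h1, h3⟩; exact ⟨⟨h1, h3 ▸ hpa⟩, h3⟩
    rw [Finset.sum_congr rfl e1, Finset.sum_const, smul_eq_mul]
  rw [hB, hA]
  ring

end LinAlg


section Counts
variable {n : ℕ} [Fact (Nat.Prime n)]

attribute [local instance] nz_of_prime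

lemma epi_eq_basisFun : (epi : Fin n → (Fin n → ZMod n)) = ⇑(Pi.basisFun (ZMod n) (Fin n)) := by
  funext i
  rw [Pi.basisFun_apply, epi]

/-- number of field elements whose coordinate vector lies in `M` is at most `finrank M` -/
lemma card_val_filter_mem_le (M : Submodule (ZMod n) (Fin n → ZMod n))
    (P : ZMod n → Prop) [DecidablePred P]
    (hP : ∀ a, P a → epi (⟨(a : ZMod n).val, ZMod.val_lt a⟩ : Fin n) ∈ M) :
    (Finset.univ.filter P).card ≤ Module.finrank (ZMod n) M := by
  classical
  set s := Finset.univ.filter P with hs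
  set g : {a // a ∈ s} → Fin n := fun a => ⟨(a.1 : ZMod n).val, ZMod.val_lt _⟩ with hg
  have hginj : Function.Injective g := by
    intro a a' h
    have : (a.1 : ZMod n).val = (a'.1 : ZMod n).val := congrArg Fin.val h
    exact Subtype.ext (ZMod.val_injective n this)
  have hli : LinearIndependent (ZMod n) (fun a : {a // a ∈ s} => epi (g a)) := by
    rw [epi_eq_basisFun]
    exact (Pi.basisFun (ZMod n) (Fin n)).linearIndependent.comp g hginj
  set f : {a // a ∈ s} → M := fun a =>
    ⟨epi (g a), hP a.1 (Finset.mem_filter.mp a.2).2⟩ with hf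
  have hlif : LinearIndependent (ZMod n) f := by
    apply LinearIndependent.of_comp M.subtype
    exact hli
  have := hlif.fintype_card_le_finrank
  exact le_trans (le_of_eq (Fintype.card_coe s).symm) this

lemma range_parity_counts :
    ∀ m : ℕ, ((Finset.range m).filter (fun v => v % 2 = 0)).card = (m + 1) / 2 ∧
      ((Finset.range m).filter (fun v => v % 2 = 1)).card = m / 2 := by
  intro m
  induction m with
  | zero => simp
  | succ m ih =>
      rw [Finset.range_add_one, Finset.filter_insert, Finset.filter_insert]
      rcases Nat.even_or_odd m with he | ho
      · have h0 : m % 2 = 0 := Nat.even_iff.mp he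
        rw [if_pos h0, if_neg (by omega)]
        rw [Finset.card_insert_of_notMem (by simp), ih.1, ih.2]
        omega
      · have h1 : m % 2 = 1 := Nat.odd_iff.mp ho
        rw [if_neg (by omega), if_pos h1]
        rw [Finset.card_insert_of_notMem (by simp), ih.1, ih.2]
        omega

lemma parity_card_le (b : Bool) :
    (Finset.univ.filter (fun a : ZMod n => (((a.val % 2 == 0) : Bool) = b))).card * 2
      ≤ n + 1 := by
  classical
  have hcard : (Finset.univ.filter
      (fun a : ZMod n => (((a.val % 2 == 0) : Bool) = b))).card =
      ((Finset.range n).filter (fun v => ((v % 2 == 0) : Bool) = b)).card := by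
    refine Finset.card_bij (fun a _ => a.val) ?_ ?_ ?_
    · intro a ha
      refine Finset.mem_filter.mpr ⟨Finset.mem_range.mpr (ZMod.val_lt a),
        (Finset.mem_filter.mp ha).2⟩
    · intro a _ a' _ h
      exact ZMod.val_injective n h
    · intro v hv
      obtain ⟨hvr, hvp⟩ := Finset.mem_filter.mp hv
      refine ⟨(v : ZMod n), Finset.mem_filter.mpr ⟨Finset.mem_univ _, ?_⟩, ?_⟩
      · rwa [ZMod.val_cast_of_lt (Finset.mem_range.mp hvr)]
      · exact ZMod.val_cast_of_lt (Finset.mem_range.mp hvr)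
  rw [hcard]
  cases b
  · have : ((Finset.range n).filter (fun v => ((v % 2 == 0) : Bool) = false)) =
        ((Finset.range n).filter (fun v => v % 2 = 1)) := by
      apply Finset.filter_congr
      intro v _
      simp only [beq_eq_false_iff_ne, ne_eq, eq_iff_iff]
      omega
    rw [this, (range_parity_counts n).2]
    omega
  · have : ((Finset.range n).filter (fun v => ((v % 2 == 0) : Bool) = true)) =
        ((Finset.range n).filter (fun v => v % 2 = 0)) := by
      apply Finset.filter_congr
      intro v _
      simp
    rw [this, (range_parity_counts n).1]
    omega

end Counts


section Main
open Classical
variable {n k : ℕ} [Fact (Nat.Prime n)] (T : DetAlg (Fin n → ZMod n) (ZMod n) Bool k)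

attribute [local instance] nz_of_prime

/-- span of all constraints defining knowledge at level `j` -/
def Mspan (x : Fin n → ZMod n) (j : ℕ) : Submodule (ZMod n) (Fin n → ZMod n) :=
  Submodule.span (ZMod n) ((Scell T x j : Set (Fin n → ZMod n)))

/-- `Wp T j x` : the `j`-th pointer coordinate is determined at level `j`. -/
def Wp (j : ℕ) (x : Fin n → ZMod n) : Prop := epi (idx x j) ∈ Mspan T x j

/-- cell/transcript map at level `m` -/
def Phi (m : ℕ) (x : Fin n → ZMod n) :
    ((Fin n → ZMod n) → Option (ZMod n)) × (Fin m → ZMod n) :=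
  (view (linOracle n x) (T.seen (linOracle n x) m), fun t => gIter n x t.1)

lemma seen_eq_of_view_eq {f f' : (Fin n → ZMod n) → ZMod n}
    {Q Q' : Finset (Fin n → ZMod n)} (h : view f Q = view f' Q') : Q = Q' := by
  ext v
  have := congrFun h v
  unfold view at this
  constructor
  · intro hv
    by_contra hv'
    rw [if_pos hv, if_neg hv'] at this
    exact Option.some_ne_none _ this
  · intro hv
    by_contra hv'
    rw [if_neg hv', if_pos hv] at this
    exact Option.some_ne_none _ this.symm

lemma Phi_eq_iff_cell (x₀ x : Fin n → ZMod n) (m : ℕ) :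
    Phi T m x = Phi T m x₀ ↔ (∀ v ∈ Scell T x₀ m, dotp v x = dotp v x₀) := by
  constructor
  · intro h
    have h1 := congrArg Prod.fst h
    have h2 := congrArg Prod.snd h
    simp only [Phi] at h1 h2
    refine (cell_iff T x₀ x m).mpr ⟨seen_eq_of_view_eq h1, h1, ?_⟩
    intro t ht
    exact congrFun h2 ⟨t, ht⟩
  · intro h
    obtain ⟨hs, hv, hg⟩ := (cell_iff T x₀ x m).mp h
    unfold Phi
    exact Prod.ext hv (funext fun t => hg t.1 t.2)

lemma idx_eq_of_cell {x₀ x : Fin n → ZMod n} {m : ℕ}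
    (h : ∀ v ∈ Scell T x₀ m, dotp v x = dotp v x₀) :
    ∀ t ≤ m, idx x t = idx x₀ t :=
  idx_eq_of_g x x₀ ((cell_iff T x₀ x m).mp h).2.2

lemma Scell_eq_of_cell {x₀ x : Fin n → ZMod n} {m : ℕ}
    (h : ∀ v ∈ Scell T x₀ m, dotp v x = dotp v x₀) :
    Scell T x m = Scell T x₀ m := by
  unfold Scell
  rw [((cell_iff T x₀ x m).mp h).1]
  congr 1
  apply Finset.image_congr
  intro t _
  show epi (idx x t.1) = epi (idx x₀ t.1)
  rw [idx_eq_of_cell T h t.1 (le_of_lt t.2)]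

lemma Scell_succ_eq_of_cell {x₀ x : Fin n → ZMod n} {m : ℕ}
    (h : ∀ v ∈ Scell T x₀ m, dotp v x = dotp v x₀) :
    Scell T x (m + 1) = Scell T x₀ (m + 1) := by
  unfold Scell
  rw [seen_succ_eq_of_cell T x₀ x m h]
  congr 1
  apply Finset.image_congr
  intro t _
  show epi (idx x t.1) = epi (idx x₀ t.1)
  rw [idx_eq_of_cell T h t.1 (Nat.lt_succ_iff.mp t.2)]

lemma Wp_const_of_cell {x₀ x : Fin n → ZMod n} {m : ℕ}
    (h : ∀ v ∈ Scell T x₀ m, dotp v x = dotp v x₀) :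
    (Wp T m x ↔ Wp T m x₀) := by
  unfold Wp Mspan
  rw [Scell_eq_of_cell T h, idx_eq_of_cell T h m le_rfl]

lemma Wp_succ_iff_of_cell {x₀ x : Fin n → ZMod n} {m : ℕ}
    (h : ∀ v ∈ Scell T x₀ m, dotp v x = dotp v x₀) :
    (Wp T (m + 1) x ↔
      epi ⟨(dotp (epi (idx x₀ m)) x).val, ZMod.val_lt _⟩ ∈ Mspan T x₀ (m + 1)) := by
  unfold Wp Mspan
  rw [Scell_succ_eq_of_cell T h]
  have hidx : idx x (m + 1) = ⟨(dotp (epi (idx x₀ m)) x).val, ZMod.val_lt _⟩ := by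
    apply Fin.ext
    show (x (idx x m)).val = (dotp (epi (idx x₀ m)) x).val
    rw [dotp_epi, idx_eq_of_cell T h m le_rfl]
  rw [hidx]

lemma Wp_zero (x : Fin n → ZMod n) : ¬ Wp T 0 x := by
  haveI : Fact (1 < n) := ⟨(Fact.out : Nat.Prime n).one_lt⟩
  unfold Wp Mspan Scell
  intro hmem
  have hempty : (T.seen (linOracle n x) 0 ∪
      (Finset.univ : Finset (Fin 0)).image (fun t => epi (idx x t.1))) =
      (∅ : Finset (Fin n → ZMod n)) := by
    simp [DetAlg.seen]
  rw [hempty] at hmem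
  simp only [Finset.coe_empty, Submodule.span_empty, Submodule.mem_bot] at hmem
  have := congrFun hmem (idx x 0)
  rw [epi, Pi.single_apply, if_pos rfl] at this
  exact one_ne_zero this

/-- Key round-by-round counting bound. -/
lemma step_bound (j : ℕ) :
    n * (Finset.univ.filter (fun x => Wp T (j+1) x ∧ ¬ Wp T j x)).card ≤
      ∑ x : Fin n → ZMod n, ((T.seen (linOracle n x) (j+1)).card + (j+1)) := by
  classical
  set E := fun x : Fin n → ZMod n => Wp T (j+1) x ∧ ¬ Wp T j x with hE
  set s := Finset.univ.filter E with hsdef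
  set t := Finset.univ.image (Phi T j) with htdef
  have hs : s.card = ∑ bc ∈ t, (s.filter (fun x => Phi T j x = bc)).card :=
    Finset.card_eq_sum_card_fiberwise
      (fun x _ => Finset.mem_image.mpr ⟨x, Finset.mem_univ _, rfl⟩)
  rw [hs, Finset.mul_sum]
  have hsum : ∑ bc ∈ t, ∑ x ∈ Finset.univ.filter (fun x => Phi T j x = bc),
      ((T.seen (linOracle n x) (j+1)).card + (j+1)) =
      ∑ x : Fin n → ZMod n, ((T.seen (linOracle n x) (j+1)).card + (j+1)) :=
    Finset.sum_fiberwise_of_maps_to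
      (fun x _ => Finset.mem_image.mpr ⟨x, Finset.mem_univ _, rfl⟩) _
  rw [← hsum]
  refine Finset.sum_le_sum ?_
  intro bc hbc
  obtain ⟨x₀, _, rfl⟩ := Finset.mem_image.mp hbc
  have cellEq : Finset.univ.filter (fun x => Phi T j x = Phi T j x₀) =
      Finset.univ.filter (fun x => ∀ v ∈ Scell T x₀ j, dotp v x = dotp v x₀) := by
    ext x
    simp only [Finset.mem_filter, Finset.mem_univ, true_and]
    exact Phi_eq_iff_cell T x₀ x j
  by_cases hW : Wp T j x₀
  · have hempty : s.filter (fun x => Phi T j x = Phi T j x₀) = ∅ := by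
      apply Finset.eq_empty_of_forall_notMem
      intro x hx
      obtain ⟨hxs, hphi⟩ := Finset.mem_filter.mp hx
      have hcell := (Phi_eq_iff_cell T x₀ x j).mp hphi
      have hEx : E x := (Finset.mem_filter.mp hxs).2
      exact hEx.2 ((Wp_const_of_cell T hcell).mpr hW)
    rw [hempty]
    simp
  · -- the interesting cell
    have hv0 : epi (idx x₀ j) ∉
        Submodule.span (ZMod n) ((Scell T x₀ j : Set (Fin n → ZMod n))) := hW
    have key := cell_count (Scell T x₀ j) (fun v => dotp v x₀) (epi (idx x₀ j)) hv0
      (fun a => epi (⟨a.val, ZMod.val_lt a⟩ : Fin n) ∈ Mspan T x₀ (j+1))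
    have hset : s.filter (fun x => Phi T j x = Phi T j x₀) =
        Finset.univ.filter (fun x => (∀ v ∈ Scell T x₀ j, dotp v x = dotp v x₀) ∧
          epi (⟨(dotp (epi (idx x₀ j)) x).val, ZMod.val_lt _⟩ : Fin n) ∈ Mspan T x₀ (j+1)) := by
      ext x
      simp only [hsdef, Finset.filter_filter, Finset.mem_filter, Finset.mem_univ, true_and]
      constructor
      · rintro ⟨hEx, hphi⟩
        have hcell := (Phi_eq_iff_cell T x₀ x j).mp hphi
        exact ⟨hcell, (Wp_succ_iff_of_cell T hcell).mp hEx.1⟩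
      · rintro ⟨hcell, hmem⟩
        refine ⟨⟨(Wp_succ_iff_of_cell T hcell).mpr hmem, ?_⟩,
          (Phi_eq_iff_cell T x₀ x j).mpr hcell⟩
        exact fun hWx => hW ((Wp_const_of_cell T hcell).mp hWx)
    have hcardP : (Finset.univ.filter
        (fun a : ZMod n => epi (⟨a.val, ZMod.val_lt a⟩ : Fin n) ∈ Mspan T x₀ (j+1))).card ≤
        (T.seen (linOracle n x₀) (j+1)).card + (j+1) := by
      refine le_trans (card_val_filter_mem_le (Mspan T x₀ (j+1)) _ (fun a ha => ha)) ?_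
      refine le_trans ?_ (le_refl _)
      have h1 : Module.finrank (ZMod n) (Mspan T x₀ (j+1)) ≤ (Scell T x₀ (j+1)).card := by
        unfold Mspan
        have := finrank_span_finset_le_card (R := ZMod n) (Scell T x₀ (j+1))
        unfold Set.finrank at this
        exact this
      refine le_trans h1 ?_
      unfold Scell
      refine le_trans (Finset.card_union_le _ _) ?_
      have h2 : ((Finset.univ : Finset (Fin (j+1))).image
          (fun t => epi (idx x₀ t.1))).card ≤ j + 1 := by
        refine le_trans (Finset.card_image_le) ?_
        simp
      omega
    calc n * (s.filter (fun x => Phi T j x = Phi T j x₀)).card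
        = (Finset.univ.filter
            (fun a : ZMod n => epi (⟨a.val, ZMod.val_lt a⟩ : Fin n) ∈ Mspan T x₀ (j+1))).card *
          (Finset.univ.filter
            (fun x : Fin n → ZMod n => ∀ v ∈ Scell T x₀ j, dotp v x = dotp v x₀)).card := by
          rw [hset, mul_comm]
          exact key
      _ ≤ ((T.seen (linOracle n x₀) (j+1)).card + (j+1)) *
            (Finset.univ.filter
              (fun x : Fin n → ZMod n => ∀ v ∈ Scell T x₀ j, dotp v x = dotp v x₀)).card :=
          Nat.mul_le_mul_right _ hcardP
      _ = ∑ x ∈ Finset.univ.filter (fun x => Phi T j x = Phi T j x₀),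
            ((T.seen (linOracle n x) (j+1)).card + (j+1)) := by
          rw [cellEq]
          rw [Finset.sum_congr rfl (fun x hx => by
            rw [seen_succ_eq_of_cell T x₀ x j (Finset.mem_filter.mp hx).2])]
          rw [Finset.sum_const, smul_eq_mul, mul_comm]

end Main


section Final
open Classical
variable {n k : ℕ} [Fact (Nat.Prime n)] (T : DetAlg (Fin n → ZMod n) (ZMod n) Bool k)

attribute [local instance] nz_of_prime

lemma run_const_of_cell {x₀ x : Fin n → ZMod n}
    (h : ∀ v ∈ Scell T x₀ (k+1), dotp v x = dotp v x₀) :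
    T.run (linOracle n x) = T.run (linOracle n x₀) := by
  obtain ⟨_, hv, _⟩ := (cell_iff T x₀ x (k+1)).mp h
  unfold DetAlg.run
  rw [hv]

lemma fAddr_eq_of_cell {x₀ x : Fin n → ZMod n}
    (h : ∀ v ∈ Scell T x₀ (k+1), dotp v x = dotp v x₀) :
    fAddr n x (k+1) = (((dotp (epi (idx x₀ (k+1))) x).val % 2 == 0) : Bool) := by
  unfold fAddr
  rw [gIter_eq_idx, idx_eq_of_cell T h (k+1) le_rfl, ← dotp_epi (idx x₀ (k+1)) x]

lemma final_count_bound :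
    2 * n * (Finset.univ.filter
        (fun x => T.run (linOracle n x) = fAddr n x (k+1))).card ≤
      2 * n * (Finset.univ.filter (Wp T (k+1))).card +
        (n + 1) * Fintype.card (Fin n → ZMod n) := by
  classical
  set sC := Finset.univ.filter
    (fun x : Fin n → ZMod n => T.run (linOracle n x) = fAddr n x (k+1)) with hsC
  set sW := Finset.univ.filter (Wp T (k+1)) with hsW
  set t := Finset.univ.image (Phi T (k+1)) with htdef
  have hmaps : ∀ x : Fin n → ZMod n, x ∈ Finset.univ →
      Phi T (k+1) x ∈ t := fun x _ => Finset.mem_image.mpr ⟨x, Finset.mem_univ _, rfl⟩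
  have hC : sC.card = ∑ bc ∈ t, (sC.filter (fun x => Phi T (k+1) x = bc)).card :=
    Finset.card_eq_sum_card_fiberwise (fun x _ => hmaps x (Finset.mem_univ _))
  have hW : sW.card = ∑ bc ∈ t, (sW.filter (fun x => Phi T (k+1) x = bc)).card :=
    Finset.card_eq_sum_card_fiberwise (fun x _ => hmaps x (Finset.mem_univ _))
  have hU : Fintype.card (Fin n → ZMod n) =
      ∑ bc ∈ t, (Finset.univ.filter (fun x => Phi T (k+1) x = bc)).card := by
    rw [← Finset.card_univ]
    exact Finset.card_eq_sum_card_fiberwise (fun x _ => hmaps x (Finset.mem_univ _))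
  rw [hC, hW, hU, Finset.mul_sum, Finset.mul_sum, Finset.mul_sum, ← Finset.sum_add_distrib]
  refine Finset.sum_le_sum ?_
  intro bc hbc
  obtain ⟨x₀, _, rfl⟩ := Finset.mem_image.mp hbc
  by_cases hWx : Wp T (k+1) x₀
  · -- cell where final pointer is determined : bound trivially by cell size
    have h1 : (sC.filter (fun x => Phi T (k+1) x = Phi T (k+1) x₀)).card ≤
        (sW.filter (fun x => Phi T (k+1) x = Phi T (k+1) x₀)).card := by
      apply Finset.card_le_card
      intro x hx
      obtain ⟨hx1, hx2⟩ := Finset.mem_filter.mp hx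
      refine Finset.mem_filter.mpr ⟨Finset.mem_filter.mpr ⟨Finset.mem_univ _, ?_⟩, hx2⟩
      exact (Wp_const_of_cell T ((Phi_eq_iff_cell T x₀ x (k+1)).mp hx2)).mpr hWx
    have := Nat.mul_le_mul_left (2 * n) h1
    omega
  · -- undetermined cell : parity is uniform
    have hv0 : epi (idx x₀ (k+1)) ∉
        Submodule.span (ZMod n) ((Scell T x₀ (k+1) : Set (Fin n → ZMod n))) := hWx
    set b₀ := T.run (linOracle n x₀) with hb₀
    have key := cell_count (Scell T x₀ (k+1)) (fun v => dotp v x₀) (epi (idx x₀ (k+1))) hv0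
      (fun a => b₀ = (((a.val % 2 == 0)) : Bool))
    have hset : sC.filter (fun x => Phi T (k+1) x = Phi T (k+1) x₀) =
        Finset.univ.filter (fun x => (∀ v ∈ Scell T x₀ (k+1), dotp v x = dotp v x₀) ∧
          b₀ = (((dotp (epi (idx x₀ (k+1))) x).val % 2 == 0) : Bool)) := by
      ext x
      simp only [hsC, Finset.filter_filter, Finset.mem_filter, Finset.mem_univ, true_and]
      constructor
      · rintro ⟨hrun, hphi⟩
        have hcell := (Phi_eq_iff_cell T x₀ x (k+1)).mp hphi
        refine ⟨hcell, ?_⟩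
        rw [hb₀, ← run_const_of_cell T hcell, hrun, fAddr_eq_of_cell T hcell]
      · rintro ⟨hcell, hpar⟩
        refine ⟨?_, (Phi_eq_iff_cell T x₀ x (k+1)).mpr hcell⟩
        rw [run_const_of_cell T hcell, fAddr_eq_of_cell T hcell, ← hb₀]
        exact hpar
    have hparity : (Finset.univ.filter
        (fun a : ZMod n => b₀ = (((a.val % 2 == 0)) : Bool))).card * 2 ≤ n + 1 := by
      have hcongr : Finset.univ.filter
          (fun a : ZMod n => b₀ = (((a.val % 2 == 0)) : Bool)) =
          Finset.univ.filter
          (fun a : ZMod n => (((a.val % 2 == 0)) : Bool) = b₀) := by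
        apply Finset.filter_congr
        intro a _
        exact ⟨Eq.symm, Eq.symm⟩
      rw [hcongr]
      exact parity_card_le b₀
    have hWempty : (sW.filter (fun x => Phi T (k+1) x = Phi T (k+1) x₀)).card ≥ 0 :=
      Nat.zero_le _
    have hmain : 2 * n * (sC.filter (fun x => Phi T (k+1) x = Phi T (k+1) x₀)).card ≤
        (n + 1) * (Finset.univ.filter
          (fun x => Phi T (k+1) x = Phi T (k+1) x₀)).card := by
      have cellEq : Finset.univ.filter (fun x => Phi T (k+1) x = Phi T (k+1) x₀) =
          Finset.univ.filter
            (fun x => ∀ v ∈ Scell T x₀ (k+1), dotp v x = dotp v x₀) := by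
        ext x
        simp only [Finset.mem_filter, Finset.mem_univ, true_and]
        exact Phi_eq_iff_cell T x₀ x (k+1)
      rw [hset, cellEq]
      calc 2 * n * (Finset.univ.filter
            (fun x => (∀ v ∈ Scell T x₀ (k+1), dotp v x = dotp v x₀) ∧
              b₀ = (((dotp (epi (idx x₀ (k+1))) x).val % 2 == 0) : Bool))).card
          = 2 * ((Finset.univ.filter
              (fun x => (∀ v ∈ Scell T x₀ (k+1), dotp v x = dotp v x₀) ∧
                b₀ = (((dotp (epi (idx x₀ (k+1))) x).val % 2 == 0) : Bool))).card * n) := by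
            ring
        _ = 2 * ((Finset.univ.filter
              (fun a : ZMod n => b₀ = (((a.val % 2 == 0)) : Bool))).card *
              (Finset.univ.filter
                (fun x : Fin n → ZMod n =>
                  ∀ v ∈ Scell T x₀ (k+1), dotp v x = dotp v x₀)).card) := by rw [key]
        _ ≤ (n + 1) * (Finset.univ.filter
              (fun x : Fin n → ZMod n =>
                ∀ v ∈ Scell T x₀ (k+1), dotp v x = dotp v x₀)).card := by
            have := Nat.mul_le_mul_right
              ((Finset.univ.filter
                (fun x : Fin n → ZMod n =>
                  ∀ v ∈ Scell T x₀ (k+1), dotp v x = dotp v x₀)).card) hparity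
            calc 2 * ((Finset.univ.filter
                  (fun a : ZMod n => b₀ = (((a.val % 2 == 0)) : Bool))).card *
                  (Finset.univ.filter
                    (fun x : Fin n → ZMod n =>
                      ∀ v ∈ Scell T x₀ (k+1), dotp v x = dotp v x₀)).card)
                = ((Finset.univ.filter
                    (fun a : ZMod n => b₀ = (((a.val % 2 == 0)) : Bool))).card * 2) *
                  (Finset.univ.filter
                    (fun x : Fin n → ZMod n =>
                      ∀ v ∈ Scell T x₀ (k+1), dotp v x = dotp v x₀)).card := by ring
              _ ≤ _ := this
    omega

end Final


section Det
open Classical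
variable {n k : ℕ} [Fact (Nat.Prime n)] (T : DetAlg (Fin n → ZMod n) (ZMod n) Bool k)

attribute [local instance] nz_of_prime

lemma W_card_bound {q : ℝ} (hq : ∀ x, (T.totalQueries (linOracle n x) : ℝ) ≤ q) :
    ∀ j, j ≤ k + 1 →
      (n : ℝ) * ((Finset.univ.filter (Wp T j)).card : ℝ) ≤
        (j : ℝ) * (q + (k+1)) * (Fintype.card (Fin n → ZMod n) : ℝ) := by
  intro j
  induction j with
  | zero =>
      intro _
      have : Finset.univ.filter (Wp T 0) = ∅ :=
        Finset.filter_eq_empty_iff.mpr (fun {x} _ => Wp_zero T x)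
      rw [this]
      simp
  | succ j ih =>
      intro hj1
      have hj : j ≤ k + 1 := le_of_lt hj1
      have hsub : Finset.univ.filter (Wp T (j+1)) ⊆
          Finset.univ.filter (Wp T j) ∪
            Finset.univ.filter (fun x => Wp T (j+1) x ∧ ¬ Wp T j x) := by
        intro x hx
        have hx1 := (Finset.mem_filter.mp hx).2
        by_cases hWj : Wp T j x
        · exact Finset.mem_union_left _ (Finset.mem_filter.mpr ⟨Finset.mem_univ _, hWj⟩)
        · exact Finset.mem_union_right _ (Finset.mem_filter.mpr ⟨Finset.mem_univ _, hx1, hWj⟩)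
      have hcard : ((Finset.univ.filter (Wp T (j+1))).card : ℝ) ≤
          ((Finset.univ.filter (Wp T j)).card : ℝ) +
          ((Finset.univ.filter (fun x => Wp T (j+1) x ∧ ¬ Wp T j x)).card : ℝ) := by
        have := le_trans (Finset.card_le_card hsub) (Finset.card_union_le _ _)
        exact_mod_cast this
      have hstep : (n : ℝ) *
          ((Finset.univ.filter (fun x => Wp T (j+1) x ∧ ¬ Wp T j x)).card : ℝ) ≤
          (q + (k+1)) * (Fintype.card (Fin n → ZMod n) : ℝ) := by
        have h1 := step_bound T j
        have h1' : ((n * (Finset.univ.filter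
            (fun x => Wp T (j+1) x ∧ ¬ Wp T j x)).card : ℕ) : ℝ) ≤
            ((∑ x : Fin n → ZMod n,
              ((T.seen (linOracle n x) (j+1)).card + (j+1)) : ℕ) : ℝ) := by
          exact_mod_cast h1
        push_cast at h1'
        refine le_trans h1' ?_
        calc ∑ x : Fin n → ZMod n, (((T.seen (linOracle n x) (j+1)).card : ℝ) + ((j:ℝ)+1))
            ≤ ∑ _x : Fin n → ZMod n, (q + ((k:ℝ)+1)) := by
              refine Finset.sum_le_sum (fun x _ => ?_)
              have hseen : ((T.seen (linOracle n x) (j+1)).card : ℝ) ≤ q :=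
                le_trans (by exact_mod_cast seen_card_le T (linOracle n x) hj1) (hq x)
              have hjk : ((j:ℝ) + 1) ≤ (k:ℝ) + 1 := by
                have : (j:ℝ) ≤ (k:ℝ) := by exact_mod_cast Nat.lt_succ_iff.mp hj1
                linarith
              linarith
          _ = (q + ((k:ℝ)+1)) * (Fintype.card (Fin n → ZMod n) : ℝ) := by
              rw [Finset.sum_const, nsmul_eq_mul, Finset.card_univ, mul_comm]
      have hmono : (n:ℝ) * ((Finset.univ.filter (Wp T (j+1))).card : ℝ) ≤
          (n:ℝ) * ((Finset.univ.filter (Wp T j)).card : ℝ) +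
          (n:ℝ) * ((Finset.univ.filter (fun x => Wp T (j+1) x ∧ ¬ Wp T j x)).card : ℝ) := by
        have hn0 : (0:ℝ) ≤ n := Nat.cast_nonneg n
        nlinarith [hcard]
      have := ih hj
      push_cast
      push_cast at this hstep hmono
      nlinarith [this, hstep, hmono]

lemma det_ineq {q : ℝ} (hq : ∀ x, (T.totalQueries (linOracle n x) : ℝ) ≤ q)
    (hcorrect : 2 * (Fintype.card (Fin n → ZMod n) : ℝ) ≤
      3 * ((Finset.univ.filter
        (fun x => T.run (linOracle n x) = fAddr n x (k+1))).card : ℝ)) :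
    (n : ℝ) - 3 ≤ 6 * ((k:ℝ) + 1) * (q + ((k:ℝ) + 1)) := by
  classical
  set N : ℝ := (Fintype.card (Fin n → ZMod n) : ℝ) with hN
  have hN0 : (0:ℝ) < N := by
    rw [hN]; exact_mod_cast Fintype.card_pos
  set cntC : ℝ := ((Finset.univ.filter
    (fun x => T.run (linOracle n x) = fAddr n x (k+1))).card : ℝ) with hcntC
  set cntW : ℝ := ((Finset.univ.filter (Wp T (k+1))).card : ℝ) with hcntW
  have hfin : 2 * (n:ℝ) * cntC ≤ 2 * (n:ℝ) * cntW + ((n:ℝ) + 1) * N := by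
    have := final_count_bound T
    have h' : ((2 * n * (Finset.univ.filter
        (fun x => T.run (linOracle n x) = fAddr n x (k+1))).card : ℕ) : ℝ) ≤
        ((2 * n * (Finset.univ.filter (Wp T (k+1))).card +
          (n + 1) * Fintype.card (Fin n → ZMod n) : ℕ) : ℝ) := by exact_mod_cast this
    push_cast at h'
    convert h' using 2 <;> push_cast <;> ring
  have hWb : (n:ℝ) * cntW ≤ ((k:ℝ)+1) * (q + (k+1)) * N := by
    have := W_card_bound T hq (k+1) le_rfl
    push_cast at this
    convert this using 2 <;> push_cast <;> ring
  have key : ((n:ℝ) - 3) * N ≤ 6 * ((k:ℝ)+1) * (q + ((k:ℝ)+1)) * N := by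
    nlinarith [hfin, hWb, hcorrect, hN0]
  exact le_of_mul_le_mul_right key hN0

end Det

section Rand
open Classical
variable {n k : ℕ} [Fact (Nat.Prime n)]

attribute [local instance] nz_of_prime

lemma exists_good_det (A : PMF (DetAlg (Fin n → ZMod n) (ZMod n) Bool k))
    (f : (Fin n → ZMod n) → Bool)
    (h : ∀ x, (2 : ℝ≥0∞) / 3 ≤ probOut A (linOracle n x) (· = f x)) :
    ∃ T ∈ A.support,
      2 * Fintype.card (Fin n → ZMod n) ≤
        3 * (Finset.univ.filter (fun x => T.run (linOracle n x) = f x)).card := by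
  classical
  by_contra hc
  push_neg at hc
  have hN1 : 1 ≤ Fintype.card (Fin n → ZMod n) := Fintype.card_pos
  set cnt : DetAlg (Fin n → ZMod n) (ZMod n) Bool k → ℕ := fun T =>
    (Finset.univ.filter (fun x => T.run (linOracle n x) = f x)).card with hcnt
  -- sum the correctness guarantee over all x
  have hsum : ((Fintype.card (Fin n → ZMod n) : ℝ≥0∞) * (2 / 3)) ≤
      ∑' T, A T * (cnt T : ℝ≥0∞) := by
    have h1 : ∑ x : Fin n → ZMod n, ((2 : ℝ≥0∞)/3) ≤
        ∑ x : Fin n → ZMod n, probOut A (linOracle n x) (· = f x) :=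
      Finset.sum_le_sum (fun x _ => h x)
    rw [Finset.sum_const] at h1
    have h3 : ∀ T : DetAlg (Fin n → ZMod n) (ZMod n) Bool k,
        ∑ x : Fin n → ZMod n,
          Set.indicator {T' | T'.run (linOracle n x) = f x} (⇑A) T =
        A T * (cnt T : ℝ≥0∞) := by
      intro T
      calc ∑ x : Fin n → ZMod n,
            Set.indicator {T' | T'.run (linOracle n x) = f x} (⇑A) T
          = ∑ x : Fin n → ZMod n,
              (if T.run (linOracle n x) = f x then A T else 0) :=
            Finset.sum_congr rfl (fun x _ => by
              rw [Set.indicator_apply]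
              simp [Set.mem_setOf_eq])
        _ = ∑ _x ∈ Finset.univ.filter
              (fun x => T.run (linOracle n x) = f x), A T :=
            (Finset.sum_filter _ _).symm
        _ = A T * (cnt T : ℝ≥0∞) := by
            rw [Finset.sum_const, nsmul_eq_mul, hcnt, mul_comm]
    calc (Fintype.card (Fin n → ZMod n) : ℝ≥0∞) * (2/3) =
          (Finset.univ.card (α := Fin n → ZMod n)) • ((2:ℝ≥0∞)/3) := by
          simp [Finset.card_univ]
      _ ≤ ∑ x : Fin n → ZMod n, probOut A (linOracle n x) (· = f x) := h1
      _ = ∑ x : Fin n → ZMod n, ∑' T,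
            Set.indicator {T' | T'.run (linOracle n x) = f x} (⇑A) T :=
          Finset.sum_congr rfl (fun x _ => by
            unfold probOut
            rw [PMF.toOuterMeasure_apply])
      _ = ∑' T, ∑ x : Fin n → ZMod n,
            Set.indicator {T' | T'.run (linOracle n x) = f x} (⇑A) T :=
          (Summable.tsum_finsetSum (fun _ _ => ENNReal.summable)).symm
      _ = ∑' T, A T * (cnt T : ℝ≥0∞) := tsum_congr h3
  -- bound each term using the contradiction hypothesis
  set C : ℕ := 2 * Fintype.card (Fin n → ZMod n) - 1 with hC
  have hterm : ∀ T, A T * (3 * cnt T : ℝ≥0∞) ≤ A T * (C : ℝ≥0∞) := by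
    intro T
    by_cases hT : A T = 0
    · rw [hT, zero_mul, zero_mul]
    · have hTs : T ∈ A.support := (PMF.mem_support_iff A T).mpr hT
      have h2 := hc T hTs
      have h3c : 3 * cnt T ≤ C := by
        simp only [hcnt]
        omega
      exact mul_le_mul_right (by exact_mod_cast h3c) _
  have h23 : (2:ℝ≥0∞)/3 * 3 = 2 := ENNReal.div_mul_cancel (by norm_num) (by norm_num)
  have hfinal : ((2 * Fintype.card (Fin n → ZMod n) : ℕ) : ℝ≥0∞) ≤ (C : ℝ≥0∞) := by
    have e1 : (3 : ℝ≥0∞) * ((Fintype.card (Fin n → ZMod n) : ℝ≥0∞) * (2/3)) =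
        ((2 * Fintype.card (Fin n → ZMod n) : ℕ) : ℝ≥0∞) := by
      push_cast
      calc (3 : ℝ≥0∞) * ((Fintype.card (Fin n → ZMod n) : ℝ≥0∞) * (2/3)) =
            ((2:ℝ≥0∞)/3 * 3) * (Fintype.card (Fin n → ZMod n) : ℝ≥0∞) := by ring
        _ = 2 * (Fintype.card (Fin n → ZMod n) : ℝ≥0∞) := by rw [h23]
    calc ((2 * Fintype.card (Fin n → ZMod n) : ℕ) : ℝ≥0∞) =
          3 * ((Fintype.card (Fin n → ZMod n) : ℝ≥0∞) * (2/3)) := e1.symm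
      _ ≤ 3 * ∑' T, A T * (cnt T : ℝ≥0∞) := mul_le_mul_right hsum _
      _ = ∑' T, A T * (3 * cnt T : ℝ≥0∞) := by
          rw [← ENNReal.tsum_mul_left]
          exact tsum_congr (fun T => by ring)
      _ ≤ ∑' T, A T * (C : ℝ≥0∞) := ENNReal.tsum_le_tsum hterm
      _ = (∑' T, A T) * (C : ℝ≥0∞) := ENNReal.tsum_mul_right
      _ = (C : ℝ≥0∞) := by rw [PMF.tsum_coe, one_mul]
  have : (2 * Fintype.card (Fin n → ZMod n) : ℕ) ≤ C := by exact_mod_cast hfinal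
  omega

end Rand


section QOne
open Classical
variable {n k : ℕ} [Fact (Nat.Prime n)]

attribute [local instance] nz_of_prime

lemma run_of_total_zero {D R O : Type} [DecidableEq D] {k : ℕ}
    (T : DetAlg D R O k) (f : D → R) (h : T.totalQueries f = 0) :
    T.run f = T.out (fun _ => none) := by
  have hq0 : ∀ ℓ : Fin (k+1), T.queries f ℓ = ∅ := by
    intro ℓ
    have := Finset.sum_eq_zero_iff.mp h ℓ (Finset.mem_univ _)
    exact Finset.card_eq_zero.mp this
  have hseen : ∀ m, m ≤ k + 1 → T.seen f m = ∅ := by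
    intro m
    induction m with
    | zero => intro _; rfl
    | succ m ih =>
        intro hm
        have hmk : m < k + 1 := hm
        have h1 := ih (le_of_lt hmk)
        show (T.seen f m ∪ if h : m < k + 1 then
          T.query ⟨m, h⟩ (view f (T.seen f m)) else ∅) = ∅
        rw [dif_pos hmk]
        have h2 : T.query ⟨m, hmk⟩ (view f (T.seen f m)) = T.queries f ⟨m, hmk⟩ := rfl
        rw [h2, hq0, h1, Finset.empty_union]
  unfold DetAlg.run
  rw [hseen (k+1) le_rfl]
  have hv : view f (∅ : Finset D) = (fun _ => none) := by
    funext v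
    unfold view
    rw [if_neg (Finset.notMem_empty v)]
  rw [hv]

lemma fAddr_zero_vec (j : ℕ) : fAddr n (fun _ => (0 : ZMod n)) j = true := by
  unfold fAddr
  rw [gIter_eq_idx]
  simp [ZMod.val_zero]

lemma fAddr_one_vec (hn3 : 3 ≤ n) (j : ℕ) : fAddr n (fun _ => (1 : ZMod n)) j = false := by
  haveI : Fact (1 < n) := ⟨by omega⟩
  unfold fAddr
  rw [gIter_eq_idx]
  simp [ZMod.val_one]

lemma one_le_q (hn3 : 3 ≤ n) {q : ℝ}
    {A : PMF (DetAlg (Fin n → ZMod n) (ZMod n) Bool k)}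
    (hA : ComputesLDT n q A (fun x => fAddr n x (k+1))) : (1 : ℝ) ≤ q := by
  by_contra hq
  push_neg at hq
  -- every algorithm in the support makes no queries at all
  have htz : ∀ T ∈ A.support, ∀ x : Fin n → ZMod n,
      T.totalQueries (linOracle n x) = 0 := by
    intro T hT x
    have := hA.1 T hT x
    have h1 : ((T.totalQueries (linOracle n x) : ℝ)) < 1 := lt_of_le_of_lt this hq
    exact_mod_cast Nat.lt_one_iff.mp (by exact_mod_cast h1)
  have h0 := hA.2 (fun _ => (0 : ZMod n))
  have h1 := hA.2 (fun _ => (1 : ZMod n))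
  simp only [fAddr_zero_vec] at h0
  simp only [fAddr_one_vec hn3] at h1
  have hle1 : probOut A (linOracle n (fun _ => (0 : ZMod n))) (· = true) +
      probOut A (linOracle n (fun _ => (1 : ZMod n))) (· = false) ≤ 1 := by
    unfold probOut
    rw [PMF.toOuterMeasure_apply, PMF.toOuterMeasure_apply, ← ENNReal.tsum_add]
    calc ∑' T, (Set.indicator {T | T.run (linOracle n (fun _ => (0 : ZMod n))) = true} (A) T +
          Set.indicator {T | T.run (linOracle n (fun _ => (1 : ZMod n))) = false} (A) T) ≤ ∑' T, A T := by
          refine ENNReal.tsum_le_tsum (fun T => ?_)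
          by_cases hT : A T = 0
          · simp [Set.indicator_apply, hT]
          · have hTs : T ∈ A.support := (PMF.mem_support_iff A T).mpr hT
            have hrun0 := run_of_total_zero T (linOracle n (fun _ => (0 : ZMod n))) (htz T hTs (fun _ => (0 : ZMod n)))
            have hrun1 := run_of_total_zero T (linOracle n (fun _ => (1 : ZMod n))) (htz T hTs (fun _ => (1 : ZMod n)))
            simp only [Set.indicator_apply, Set.mem_setOf_eq, hrun0, hrun1]
            cases hb : T.out (fun _ => none)
            · rw [if_neg (by simp [hb]), if_pos (by simp [hb]), zero_add]
            · rw [if_pos (by simp [hb]), if_neg (by simp [hb]), add_zero]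
      _ = 1 := PMF.tsum_coe A
  have hsum : (2 : ℝ≥0∞)/3 + 2/3 ≤ 1 := le_trans (add_le_add h0 h1) hle1
  have h3 : ((2 : ℝ≥0∞)/3 + 2/3) * 3 ≤ 1 * 3 := mul_le_mul_left hsum 3
  rw [add_mul, ENNReal.div_mul_cancel (by norm_num) (by norm_num), one_mul] at h3
  norm_num at h3

end QOne

lemma arith_final {nr K L q : ℝ} (hn3 : 3 ≤ nr) (hK1 : 1 ≤ K) (hL1 : 1 ≤ L)
    (hq1 : 1 ≤ q) (hdet : nr - 3 ≤ 6 * K * (q + K)) :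
    (1/1000) * nr / (K^2 * L) ≤ q := by
  have hK0 : (0:ℝ) < K := by linarith
  have hL0 : (0:ℝ) < L := by linarith
  have hn0 : (0:ℝ) ≤ nr := by linarith
  by_cases hcase : (1/1000) * nr ≤ K^2
  · have hden : (0:ℝ) < K^2 * L := by positivity
    have hle : (1/1000) * nr / (K^2 * L) ≤ 1 := by
      rw [div_le_one hden]
      calc (1/1000) * nr ≤ K^2 := hcase
        _ = K^2 * 1 := by ring
        _ ≤ K^2 * L := by nlinarith
    linarith
  · push_neg at hcase
    have hn1000 : (1000:ℝ) < nr := by nlinarith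
    have h1 : (1/1000) * nr / (K^2 * L) ≤ (1/1000) * nr / K^2 := by
      apply div_le_div_of_nonneg_left (by positivity) (by positivity)
      nlinarith
    have h2 : (1/1000) * nr / K^2 ≤ (nr - 3)/(6*K) - K := by
      rw [div_le_iff₀ (by positivity : (0:ℝ) < K^2)]
      have hcn0 : (0:ℝ) < (1/1000) * nr := by linarith
      have hK3 : K * K^2 < K * ((1/1000) * nr) := mul_lt_mul_of_pos_left hcase hK0
      have h12 : 12 * ((1/1000) * nr) ≤ nr - 3 := by linarith
      have hRK : (nr - 3)/(6*K) * K^2 = (nr-3)*K/6 := by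
        field_simp
      rw [sub_mul, hRK]
      nlinarith [hK3, h12, hK1, hcn0,
        mul_nonneg (by linarith : (0:ℝ) ≤ (nr-3) - 12*((1/1000)*nr)) (le_of_lt hK0),
        mul_nonneg (le_of_lt hcn0) (by linarith : (0:ℝ) ≤ K - 1)]
    have h3 : (nr - 3)/(6*K) - K ≤ q := by
      have h4 : (nr - 3)/(6*K) ≤ q + K := by
        rw [div_le_iff₀ (by positivity : (0:ℝ) < 6*K)]
        nlinarith [hdet]
      linarith
    linarith

end Adaptivity

open Adaptivity in
/-- There is an absolute constant `c > 0` such that for every prime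
`n ≥ 3` and every `0 ≤ k ≤ c·(n/log n)^{1/3}`, every randomized `(k,q)`-round-adaptive
linear decision tree computing the `(k+1)`-iterated address function `f_{k+1}`
satisfies `q ≥ c·n/((k+1)²·log n)`. -/
theorem randLDT_lower_bound :
    ∃ c : ℝ, 0 < c ∧
      ∀ n : ℕ, n.Prime → 3 ≤ n →
        ∀ k : ℕ, (k : ℝ) ≤ c * ((n : ℝ) / Real.log n) ^ ((1 : ℝ) / 3) →
          ∀ q : ℝ, ∀ A : PMF (DetAlg (Fin n → ZMod n) (ZMod n) Bool k),
            ComputesLDT n q A (fun x => fAddr n x (k + 1)) →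
              c * (n : ℝ) / (((k : ℝ) + 1) ^ 2 * Real.log n) ≤ q := by
  refine ⟨1/1000, by norm_num, ?_⟩
  intro n hp hn3 k _ q A hA
  haveI : Fact (Nat.Prime n) := ⟨hp⟩
  haveI : NeZero n := nz_of_prime
  have hK1 : (1:ℝ) ≤ (k:ℝ) + 1 := by
    have : (0:ℝ) ≤ k := Nat.cast_nonneg k
    linarith
  have hn3' : (3:ℝ) ≤ (n:ℝ) := by exact_mod_cast hn3
  have hlog1 : (1:ℝ) ≤ Real.log n := by
    have h3 : (1:ℝ) ≤ Real.log 3 := by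
      rw [Real.le_log_iff_exp_le (by norm_num)]
      exact le_trans (le_of_lt Real.exp_one_lt_d9) (by norm_num)
    exact le_trans h3 (Real.log_le_log (by norm_num) hn3')
  have hq1 : (1:ℝ) ≤ q := one_le_q hn3 hA
  obtain ⟨T, hT, hcnt⟩ := exists_good_det A (fun x => fAddr n x (k+1)) hA.2
  have hqT : ∀ x, ((T.totalQueries (linOracle n x) : ℝ)) ≤ q := hA.1 T hT
  have hdet : (n:ℝ) - 3 ≤ 6 * ((k:ℝ)+1) * (q + ((k:ℝ)+1)) :=
    det_ineq T hqT (by exact_mod_cast hcnt)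
  exact arith_final hn3' hK1 hlog1 hq1 hdet
end
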